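/- arXiv:1407.0156 — 4 statements merged into one kernel-verified Lean document; each statement's English description precedes it below -/
import Mathlib

section
/- Let 1 < p < ∞ and ψ : [0,1] → [0,∞) be measurable with ∫₀¹ t^{-d/p} ψ(t) dt < ∞. Then the weighted Hardy operator U_ψ f(x) = ∫₀¹ f(tx) ψ(t) dt is bounded on L^p(ℝ^d) with operator norm at most ∫₀¹ t^{-d/p} ψ(t) dt; that is, ‖U_ψ f‖_{L^p} ≤ (∫₀¹ t^{-d/p} ψ(t) dt) ‖f‖_{L^p} for all f ∈ L^p(ℝ^d). -/
open MeasureTheory Metric Set ENNReal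

open Function in
/-- **Minkowski's integral inequality** for `ℝ≥0∞`-valued functions. -/
theorem mink_aux {α β : Type*} [MeasurableSpace α] [MeasurableSpace β]
    (μ : Measure α) (ν : Measure β) [SigmaFinite μ] [SFinite ν]
    {p q : ℝ} (hpq : p.HolderConjugate q)
    {F : β → α → ℝ≥0∞} (hF : Measurable (Function.uncurry F)) :
    (∫⁻ x, (∫⁻ t, F t x ∂ν) ^ p ∂μ) ^ (1 / p) ≤
      ∫⁻ t, (∫⁻ x, F t x ^ p ∂μ) ^ (1 / p) ∂ν := by
  have hp0 : 0 < p := hpq.pos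
  set Φ : α → ℝ≥0∞ := fun x => ∫⁻ t, F t x ∂ν with hΦdef
  have hΦ : Measurable Φ := hF.lintegral_prod_left
  set J : ℝ≥0∞ := ∫⁻ t, (∫⁻ x, F t x ^ p ∂μ) ^ (1 / p) ∂ν with hJdef
  set s : ℕ → Set α := spanningSets μ with hsdef
  set Φn : ℕ → α → ℝ≥0∞ := fun n => (s n).indicator (fun x => min (Φ x) n) with hΦndef
  have hΦn_meas : ∀ n, Measurable (Φn n) := fun n =>
    (hΦ.min measurable_const).indicator (measurableSet_spanningSets μ n)
  have hΦn_le : ∀ n x, Φn n x ≤ Φ x := by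
    intro n x
    by_cases hx : x ∈ s n
    · simp [Φn, indicator_of_mem hx, min_le_left]
    · simp [Φn, indicator_of_notMem hx]
  have hΦn_lt_top : ∀ n x, Φn n x ≤ (n : ℝ≥0∞) := by
    intro n x
    by_cases hx : x ∈ s n
    · simp [Φn, indicator_of_mem hx, min_le_right]
    · simp [Φn, indicator_of_notMem hx]
  set I : ℕ → ℝ≥0∞ := fun n => ∫⁻ x, Φn n x ^ p ∂μ with hIdef
  have hI_fin : ∀ n, I n ≠ ⊤ := by
    intro n
    have : I n ≤ ∫⁻ x, (s n).indicator (fun _ => (n : ℝ≥0∞) ^ p) x ∂μ := by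
      apply lintegral_mono
      intro x
      by_cases hx : x ∈ s n
      · simp only [Φn, indicator_of_mem hx]
        exact ENNReal.rpow_le_rpow (min_le_right _ _) hp0.le
      · simp [Φn, indicator_of_notMem hx, ENNReal.zero_rpow_of_pos hp0]
    rw [lintegral_indicator (measurableSet_spanningSets μ n), lintegral_const,
      Measure.restrict_apply_univ] at this
    refine ne_top_of_le_ne_top ?_ this
    exact ENNReal.mul_ne_top (by simp [ENNReal.rpow_eq_top_iff, hp0, hp0.not_gt])
      (measure_spanningSets_lt_top μ n).ne
  have key : ∀ n, I n ≤ J * I n ^ (1 / q) := by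
    intro n
    have step1 : I n ≤ ∫⁻ x, ∫⁻ t, F t x * Φn n x ^ (p - 1) ∂ν ∂μ := by
      apply lintegral_mono
      intro x
      have hsl : Measurable fun t => F t x :=
        hF.comp (measurable_id.prodMk measurable_const)
      show Φn n x ^ p ≤ ∫⁻ t, F t x * Φn n x ^ (p - 1) ∂ν
      rw [lintegral_mul_const _ hsl]
      calc Φn n x ^ p ≤ Φn n x * Φn n x ^ (p - 1) := by
            by_cases h0 : Φn n x = 0
            · simp [h0, ENNReal.zero_rpow_of_pos hp0]
            · have hT : Φn n x ≠ ⊤ := ne_top_of_le_ne_top (by simp) (hΦn_lt_top n x)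
              nth_rewrite 1 [show p = 1 + (p - 1) by ring]
              rw [ENNReal.rpow_add _ _ h0 hT, ENNReal.rpow_one]
        _ ≤ Φ x * Φn n x ^ (p - 1) := by gcongr; exact hΦn_le n x
    have step2 : (∫⁻ x, ∫⁻ t, F t x * Φn n x ^ (p - 1) ∂ν ∂μ)
        = ∫⁻ t, ∫⁻ x, F t x * Φn n x ^ (p - 1) ∂μ ∂ν := by
      have : Measurable (uncurry fun (x : α) (t : β) => F t x * Φn n x ^ (p - 1)) := by
        apply Measurable.mul
        · exact hF.comp measurable_swap
        · exact ((hΦn_meas n).comp measurable_fst).pow_const _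
      exact lintegral_lintegral_swap this.aemeasurable
    have step3 : (∫⁻ t, ∫⁻ x, F t x * Φn n x ^ (p - 1) ∂μ ∂ν) ≤ J * I n ^ (1 / q) := by
      have hJm : Measurable fun t => (∫⁻ x, F t x ^ p ∂μ) ^ (1 / p) :=
        (Measurable.lintegral_prod_right'
          ((hF.pow_const p : Measurable fun z : β × α => uncurry F z ^ p))).pow_const _
      have hre : J * I n ^ (1 / q) = ∫⁻ t, (∫⁻ x, F t x ^ p ∂μ) ^ (1 / p) * I n ^ (1 / q) ∂ν :=
        (lintegral_mul_const _ hJm).symm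
      rw [hre]
      apply lintegral_mono
      intro t
      have hsl : Measurable fun x => F t x := hF.comp (measurable_const.prodMk measurable_id)
      calc (∫⁻ x, F t x * Φn n x ^ (p - 1) ∂μ)
          ≤ (∫⁻ x, F t x ^ p ∂μ) ^ (1 / p) * (∫⁻ x, (Φn n x ^ (p - 1)) ^ q ∂μ) ^ (1 / q) :=
            ENNReal.lintegral_mul_le_Lp_mul_Lq μ hpq hsl.aemeasurable
              (((hΦn_meas n).pow_const _).aemeasurable)
        _ = (∫⁻ x, F t x ^ p ∂μ) ^ (1 / p) * I n ^ (1 / q) := by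
            congr 1
            rw [hIdef]
            congr 1
            apply lintegral_congr
            intro x
            rw [← ENNReal.rpow_mul, hpq.sub_one_mul_conj]
    exact step1.trans (step2.trans_le step3)
  have key2 : ∀ n, I n ^ (1 / p) ≤ J := by
    intro n
    by_cases h0 : I n = 0
    · rw [h0, ENNReal.zero_rpow_of_pos (by positivity : (0:ℝ) < 1 / p)]
      exact zero_le
    · have hq0 : 0 < q := hpq.symm.pos
      calc I n ^ (1 / p) = I n * I n ^ (-(1 / q)) := by
            nth_rewrite 1 [show (1 : ℝ) / p = 1 + -(1 / q) by
              have := hpq.inv_add_inv_eq_one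
              simp only [one_div] at this ⊢
              linarith]
            rw [ENNReal.rpow_add _ _ h0 (hI_fin n), ENNReal.rpow_one]
        _ ≤ (J * I n ^ (1 / q)) * I n ^ (-(1 / q)) := by gcongr; exact key n
        _ = J * (I n ^ (1 / q) * I n ^ (-(1 / q))) := by ring
        _ = J := by
            rw [← ENNReal.rpow_add _ _ h0 (hI_fin n)]
            simp
  -- monotone convergence
  have hmono' : ∀ {m n : ℕ}, m ≤ n → ∀ x, Φn m x ≤ Φn n x := by
    intro m n hmn x
    by_cases hx : x ∈ s m
    · have hx' : x ∈ s n := monotone_spanningSets μ hmn hx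
      simp only [Φn, indicator_of_mem hx, indicator_of_mem hx']
      exact min_le_min le_rfl (by exact_mod_cast Nat.cast_le.2 hmn)
    · simp [Φn, indicator_of_notMem hx]
  have hmono : Monotone fun n x => Φn n x ^ p := by
    intro m n hmn x
    exact ENNReal.rpow_le_rpow (hmono' hmn x) hp0.le
  have hsupΦ : ∀ x, (⨆ n, Φn n x) = Φ x := by
    intro x
    obtain ⟨m, hm⟩ : ∃ m, x ∈ s m := by
      have hx : x ∈ ⋃ n, s n := by
        rw [hsdef, iUnion_spanningSets]; trivial
      exact mem_iUnion.mp hx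
    apply le_antisymm (iSup_le fun n => hΦn_le n x)
    by_cases hT : Φ x = ⊤
    · rw [hT]
      have h1 : ∀ k : ℕ, (k : ℝ≥0∞) ≤ ⨆ n, Φn n x := by
        intro k
        refine le_trans ?_ (le_iSup (fun n => Φn n x) (max k m))
        have hx' : x ∈ s (max k m) := monotone_spanningSets μ (le_max_right k m) hm
        simp only [Φn, indicator_of_mem hx', hT]
        simp only [min_eq_right (le_top : ((max k m : ℕ) : ℝ≥0∞) ≤ ⊤)]
        exact_mod_cast Nat.cast_le.2 (le_max_left k m)
      calc (⊤ : ℝ≥0∞) = ⨆ k : ℕ, (k : ℝ≥0∞) := ENNReal.iSup_natCast.symm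
        _ ≤ ⨆ n, Φn n x := iSup_le h1
    · obtain ⟨k, hk⟩ := ENNReal.exists_nat_gt hT
      refine le_trans ?_ (le_iSup (fun n => Φn n x) (max k m))
      have hx' : x ∈ s (max k m) := monotone_spanningSets μ (le_max_right k m) hm
      simp only [Φn, indicator_of_mem hx']
      rw [min_eq_left]
      exact le_trans hk.le (by exact_mod_cast Nat.cast_le.2 (le_max_left k m))
  have hsup : ∀ x, (⨆ n, Φn n x ^ p) = Φ x ^ p := by
    intro x
    have := map_iSup (ENNReal.orderIsoRpow p hp0) (fun n => Φn n x)
    simp only [ENNReal.orderIsoRpow_apply] at this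
    rw [← this, hsupΦ]
  have hMCT : (∫⁻ x, Φ x ^ p ∂μ) = ⨆ n, I n := by
    rw [← lintegral_iSup (fun n => (hΦn_meas n).pow_const p) hmono]
    apply lintegral_congr
    intro x
    exact (hsup x).symm
  rw [hMCT]
  have : (⨆ n, I n) ≤ J ^ p := by
    apply iSup_le
    intro n
    have := ENNReal.rpow_le_rpow (key2 n) hp0.le
    rwa [← ENNReal.rpow_mul, one_div, inv_mul_cancel₀ hp0.ne', ENNReal.rpow_one] at this
  calc (⨆ n, I n) ^ (1 / p) ≤ (J ^ p) ^ (1 / p) := ENNReal.rpow_le_rpow this (by positivity)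
    _ = J := by rw [← ENNReal.rpow_mul, mul_one_div_cancel hp0.ne', ENNReal.rpow_one]

/-- The weighted Hardy operator `U_ψ f (x) = ∫₀¹ f (t x) ψ(t) dt`. -/
noncomputable def hardyOp (d : ℕ) (ψ : ℝ → ℝ) (f : EuclideanSpace ℝ (Fin d) → ℂ) :
    EuclideanSpace ℝ (Fin d) → ℂ :=
  fun x => ∫ t in Set.Icc (0 : ℝ) 1, (ψ t : ℂ) * f (t • x)

/-- Sufficiency and norm bound for the weighted Hardy operator on `L^p(ℝ^d)`. -/
theorem hardyOp_bounded (d : ℕ) (hd : 0 < d) (p : ℝ) (hp : 1 < p)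
    (ψ : ℝ → ℝ) (hψmeas : Measurable ψ) (hψnonneg : ∀ t ∈ Set.Icc (0 : ℝ) 1, 0 ≤ ψ t)
    (A : ℝ≥0∞)
    (hA : A = ∫⁻ t in Set.Icc (0 : ℝ) 1, ENNReal.ofReal (t ^ (-(d : ℝ) / p) * ψ t))
    (hAfin : A ≠ ⊤) :
    ∀ f : EuclideanSpace ℝ (Fin d) → ℂ, MemLp f (ENNReal.ofReal p) volume →
      eLpNorm (hardyOp d ψ f) (ENNReal.ofReal p) volume ≤
        A * eLpNorm f (ENNReal.ofReal p) volume := by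
  intro f hf
  have hp0 : 0 < p := by linarith
  have hP0 : (ENNReal.ofReal p) ≠ 0 := by
    simp only [ne_eq, ENNReal.ofReal_eq_zero, not_le]; linarith
  have hPtop : (ENNReal.ofReal p) ≠ ⊤ := ofReal_ne_top
  have hPto : (ENNReal.ofReal p).toReal = p := toReal_ofReal hp0.le
  -- replace `f` by a measurable representative `g`
  have hg1 := hf.1
  set g : EuclideanSpace ℝ (Fin d) → ℂ := hg1.mk f with hgdef
  have hgsm : StronglyMeasurable g := hg1.stronglyMeasurable_mk
  have hfg : f =ᵐ[volume] g := hg1.ae_eq_mk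
  have hg : Measurable g := hgsm.measurable
  set ν : Measure ℝ := volume.restrict (Icc (0:ℝ) 1) with hνdef
  have hν0 : ∀ᵐ t ∂ν, t ≠ 0 := by
    rw [ae_iff]
    have h1 : {t : ℝ | ¬t ≠ 0} = {(0:ℝ)} := by ext t; simp
    rw [h1, hνdef, Measure.restrict_apply (measurableSet_singleton 0)]
    exact measure_mono_null inter_subset_left (Real.volume_singleton)
  -- a.e. equality of the Hardy operators
  have hae : ∀ᵐ x ∂(volume : Measure (EuclideanSpace ℝ (Fin d))),
      ∀ᵐ t ∂ν, f (t • x) = g (t • x) := by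
    obtain ⟨N, hNsub, hNmeas, hNnull⟩ := exists_measurable_superset_of_null (ae_iff.mp hfg)
    have hSmeas : MeasurableSet {z : EuclideanSpace ℝ (Fin d) × ℝ | z.2 • z.1 ∈ N} :=
      (measurable_snd.smul measurable_fst) hNmeas
    have hSnull : (volume.prod ν) {z : EuclideanSpace ℝ (Fin d) × ℝ | z.2 • z.1 ∈ N} = 0 := by
      rw [Measure.prod_apply_symm hSmeas]
      have hz : ∀ᵐ t ∂ν, volume ((fun x : EuclideanSpace ℝ (Fin d) => (x, t)) ⁻¹'
          {z : EuclideanSpace ℝ (Fin d) × ℝ | z.2 • z.1 ∈ N}) = 0 := by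
        filter_upwards [hν0] with t ht
        have h1 : ((fun x : EuclideanSpace ℝ (Fin d) => (x, t)) ⁻¹'
            {z : EuclideanSpace ℝ (Fin d) × ℝ | z.2 • z.1 ∈ N})
            = (fun x : EuclideanSpace ℝ (Fin d) => t • x) ⁻¹' N := rfl
        rw [h1, Set.preimage_smul₀ ht, Measure.addHaar_smul]
        simp [hNnull]
      calc (∫⁻ t, volume ((fun x : EuclideanSpace ℝ (Fin d) => (x, t)) ⁻¹'
              {z : EuclideanSpace ℝ (Fin d) × ℝ | z.2 • z.1 ∈ N}) ∂ν)
          = ∫⁻ _, 0 ∂ν := lintegral_congr_ae hz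
        _ = 0 := lintegral_zero
    have hae' : ∀ᵐ z ∂(volume.prod ν), f (z.2 • z.1) = g (z.2 • z.1) := by
      rw [ae_iff]
      refine measure_mono_null ?_ hSnull
      intro z hz
      exact hNsub hz
    exact Measure.ae_ae_of_ae_prod hae'
  have hOPae : hardyOp d ψ f =ᵐ[volume] hardyOp d ψ g := by
    filter_upwards [hae] with x hx
    exact integral_congr_ae (by filter_upwards [hx] with t ht; rw [ht])
  rw [eLpNorm_congr_ae hOPae, eLpNorm_congr_ae hfg]
  -- the nonnegative kernel
  set F : ℝ → EuclideanSpace ℝ (Fin d) → ℝ≥0∞ :=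
    fun t x => (‖ψ t‖₊ : ℝ≥0∞) * (‖g (t • x)‖₊ : ℝ≥0∞) with hFdef
  have hF : Measurable (Function.uncurry F) := by
    refine Measurable.mul (f := fun z : ℝ × EuclideanSpace ℝ (Fin d) => (‖ψ z.1‖₊ : ℝ≥0∞))
      (g := fun z => (‖g (z.1 • z.2)‖₊ : ℝ≥0∞)) ?_ ?_
    · exact (hψmeas.comp measurable_fst).enorm
    · exact (hg.comp (measurable_fst.smul measurable_snd)).enorm
  have hq : p.HolderConjugate p.conjExponent := Real.HolderConjugate.conjExponent hp
  -- pointwise bound on the Hardy operator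
  have hpt : ∀ x, (‖hardyOp d ψ g x‖₊ : ℝ≥0∞) ≤ ∫⁻ t, F t x ∂ν := by
    intro x
    refine le_trans (enorm_integral_le_lintegral_enorm _) (le_of_eq ?_)
    apply lintegral_congr
    intro t
    rw [hFdef]
    simp only [enorm_eq_nnnorm, nnnorm_mul, ENNReal.coe_mul, Complex.nnnorm_real]
  have hLP : ∀ h : EuclideanSpace ℝ (Fin d) → ℂ, eLpNorm h (ENNReal.ofReal p) volume
      = (∫⁻ x, (‖h x‖₊ : ℝ≥0∞) ^ p ∂volume) ^ (1/p) := by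
    intro h
    rw [eLpNorm_eq_lintegral_rpow_enorm_toReal hP0 hPtop, hPto]
    rfl
  rw [hLP, hLP]
  set Egp : ℝ≥0∞ := ∫⁻ x, (‖g x‖₊ : ℝ≥0∞) ^ p ∂volume with hEgpdef
  calc (∫⁻ x, (‖hardyOp d ψ g x‖₊ : ℝ≥0∞) ^ p ∂volume) ^ (1/p)
      ≤ (∫⁻ x, (∫⁻ t, F t x ∂ν) ^ p ∂volume) ^ (1/p) := by
        refine ENNReal.rpow_le_rpow ?_ (by positivity)
        refine lintegral_mono fun x => ?_
        exact ENNReal.rpow_le_rpow (hpt x) hp0.le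
    _ ≤ ∫⁻ t, (∫⁻ x, F t x ^ p ∂volume) ^ (1/p) ∂ν := mink_aux volume ν hq hF
    _ = A * Egp ^ (1/p) := ?_
  -- compute the `t`-integral
  have hIoc : ν = volume.restrict (Ioc (0:ℝ) 1) := by
    rw [hνdef, Measure.restrict_congr_set Ioc_ae_eq_Icc]
  have hAint : A = ∫⁻ t in Ioc (0:ℝ) 1, ENNReal.ofReal (t ^ (-(d : ℝ) / p) * ψ t) := by
    rw [hA, hIoc]
  have hpert : ∀ t ∈ Ioc (0:ℝ) 1, (∫⁻ x, F t x ^ p ∂volume) ^ (1/p)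
      = ENNReal.ofReal (t ^ (-(d : ℝ) / p) * ψ t) * Egp ^ (1/p) := by
    intro t ht
    have ht0 : 0 < t := ht.1
    have hψt : 0 ≤ ψ t := hψnonneg t ⟨ht0.le, ht.2⟩
    have h1 : ∀ x : EuclideanSpace ℝ (Fin d),
        F t x ^ p = (‖ψ t‖₊ : ℝ≥0∞) ^ p * (‖g (t • x)‖₊ : ℝ≥0∞) ^ p := by
      intro x; rw [hFdef]; exact ENNReal.mul_rpow_of_nonneg _ _ hp0.le
    have hGm : Measurable fun y : EuclideanSpace ℝ (Fin d) => (‖g y‖₊ : ℝ≥0∞) ^ p :=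
      hg.enorm.pow_const p
    have h3 : (∫⁻ x, (‖g (t • x)‖₊ : ℝ≥0∞) ^ p ∂volume)
        = ENNReal.ofReal ((t ^ d)⁻¹) * Egp := by
      calc (∫⁻ x, (‖g (t • x)‖₊ : ℝ≥0∞) ^ p ∂volume)
          = ∫⁻ y, (‖g y‖₊ : ℝ≥0∞) ^ p
              ∂(Measure.map (fun x : EuclideanSpace ℝ (Fin d) => t • x) volume) :=
            (lintegral_map hGm (measurable_const_smul t)).symm
        _ = ENNReal.ofReal ((t ^ d)⁻¹) * Egp := by
            rw [Measure.map_addHaar_smul volume ht0.ne', lintegral_smul_measure]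
            congr 2
            rw [finrank_euclideanSpace_fin, abs_of_nonneg (by positivity)]
    have h2 : (∫⁻ x, F t x ^ p ∂volume)
        = (‖ψ t‖₊ : ℝ≥0∞) ^ p * (ENNReal.ofReal ((t ^ d)⁻¹) * Egp) := by
      calc (∫⁻ x, F t x ^ p ∂volume)
          = ∫⁻ x, (‖ψ t‖₊ : ℝ≥0∞) ^ p * (‖g (t • x)‖₊ : ℝ≥0∞) ^ p ∂volume :=
            lintegral_congr h1
        _ = (‖ψ t‖₊ : ℝ≥0∞) ^ p * ∫⁻ x, (‖g (t • x)‖₊ : ℝ≥0∞) ^ p ∂volume :=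
            lintegral_const_mul _ ((hg.comp (measurable_const_smul t)).enorm.pow_const p)
        _ = _ := by rw [h3]
    rw [h2]
    rw [ENNReal.mul_rpow_of_nonneg _ _ (by positivity : (0:ℝ) ≤ 1/p),
      ENNReal.mul_rpow_of_nonneg _ _ (by positivity : (0:ℝ) ≤ 1/p)]
    rw [← ENNReal.rpow_mul, mul_one_div_cancel hp0.ne', ENNReal.rpow_one]
    rw [ENNReal.ofReal_rpow_of_pos (by positivity)]
    have hexp : ((t ^ d)⁻¹ : ℝ) ^ (1/p) = t ^ (-(d : ℝ) / p) := by
      rw [← Real.rpow_natCast t d, ← Real.rpow_neg ht0.le, ← Real.rpow_mul ht0.le]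
      congr 1
      ring
    rw [hexp, ← enorm_eq_nnnorm, Real.enorm_eq_ofReal hψt,
      ENNReal.ofReal_mul (by positivity : (0:ℝ) ≤ t ^ (-(d : ℝ) / p))]
    ring
  rw [hIoc, setLIntegral_congr_fun measurableSet_Ioc hpert, hAint]
  have hmeasA : Measurable fun t : ℝ => ENNReal.ofReal (t ^ (-(d : ℝ) / p) * ψ t) :=
    ((measurable_id.pow_const _).mul hψmeas).ennreal_ofReal
  rw [lintegral_mul_const _ hmeasA]
end

section
/- Hardy's integral inequality: for 1 < p < ∞ and f ∈ L^p(ℝ), the Hardy operator Sf(x) = (1/x) ∫₀^x f(t) dt satisfies ‖Sf‖_{L^p(ℝ)} ≤ (p/(p−1)) ‖f‖_{L^p(ℝ)}. -/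
open MeasureTheory Metric Set ENNReal
open scoped Interval
open intervalIntegral in
lemma my_integral_rpow {a b : ℝ} {r : ℝ} (h : -1 < r ∨ r ≠ -1 ∧ (0 : ℝ) ∉ [[a, b]]) :
    ∫ x in a..b, x ^ r = (b ^ (r + 1) - a ^ (r + 1)) / (r + 1) := integral_rpow h

lemma hardy_scale (g : ℝ → ℝ≥0∞) (hg : Measurable g) {t : ℝ} (ht : 0 < t) :
    ∫⁻ x, g (t * x) = ENNReal.ofReal t⁻¹ * ∫⁻ y, g y := by
  rw [← lintegral_map hg (measurable_const_mul t), Real.map_volume_mul_left ht.ne',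
    lintegral_smul_measure, abs_of_pos (inv_pos.2 ht), smul_eq_mul]

lemma hardy_const (p : ℝ) (hp : 1 < p) :
    ∫⁻ t in Ioc (0:ℝ) 1, ENNReal.ofReal (t ^ (-(1/p))) = ENNReal.ofReal (p / (p - 1)) := by
  have hp0 : (0:ℝ) < p := lt_trans one_pos hp
  have hr : (-1:ℝ) < -(1/p) := by
    rw [neg_lt_neg_iff]
    rw [div_lt_one hp0]; exact hp
  have hr1 : 0 < -(1/p) + 1 := by
    have : 1/p < 1 := by rw [div_lt_one hp0]; exact hp
    linarith
  have hint : IntegrableOn (fun t : ℝ => t ^ (-(1/p))) (Ioc 0 1) := by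
    have h := intervalIntegral.intervalIntegrable_rpow' (a := 0) (b := 1) hr
    rwa [intervalIntegrable_iff, uIoc_of_le zero_le_one] at h
  rw [← ofReal_integral_eq_lintegral_ofReal hint]
  · congr 1
    rw [← intervalIntegral.integral_of_le zero_le_one]
    rw [my_integral_rpow (Or.inl hr),
      Real.one_rpow, Real.zero_rpow hr1.ne']
    have h1 : -(1/p) + 1 = (p-1)/p := by field_simp; ring
    rw [sub_zero, h1, one_div_div]
  · filter_upwards [ae_restrict_mem measurableSet_Ioc] with t ht
    exact Real.rpow_nonneg ht.1.le _

lemma hardy_core (p q : ℝ) (hp : 1 < p) (hpq : p.HolderConjugate q)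
    (g : ℝ → ℝ≥0∞) (hg : Measurable g) (hI : ∫⁻ y, g y ^ p ≠ ∞) :
    ∫⁻ x, (∫⁻ t in Ioc (0:ℝ) 1, g (t * x)) ^ p ≤
      (ENNReal.ofReal (p / (p - 1)) * (∫⁻ y, g y ^ p) ^ (1/p)) ^ p := by
  have hp0 : (0:ℝ) < p := lt_trans one_pos hp
  set I : ℝ≥0∞ := ∫⁻ y, g y ^ p with hIdef
  set K : ℝ≥0∞ := ENNReal.ofReal (p / (p - 1)) * I ^ (1/p) with hKdef
  set T : ℕ → Set ℝ := fun n => Icc ((n+1:ℝ)⁻¹) 1 with hTdef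
  set S : ℕ → Set ℝ := fun n => Icc (-(n+1:ℝ)) ((n:ℝ)+1) with hSdef
  set G : ℝ → ℝ≥0∞ := fun x => ∫⁻ t in Ioc (0:ℝ) 1, g (t * x) with hGdef
  set Gn : ℕ → ℝ → ℝ≥0∞ := fun n x => ∫⁻ t in T n, g (t * x) with hGndef
  set An : ℕ → ℝ≥0∞ := fun n => ∫⁻ x in S n, Gn n x ^ p with hAndef
  have hgp : Measurable fun y => g y ^ p := hg.pow_const p
  have hjoint : Measurable fun z : ℝ × ℝ => g (z.2 * z.1) :=
    hg.comp (measurable_snd.mul measurable_fst)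
  have hTsub : ∀ n, T n ⊆ Ioc (0:ℝ) 1 := by
    intro n t ht
    exact ⟨lt_of_lt_of_le (by positivity) ht.1, ht.2⟩
  have hTmono : Monotone T := by
    intro n m hnm
    apply Icc_subset_Icc_left
    have h1 : (n:ℝ) ≤ m := Nat.cast_le.2 hnm
    apply inv_anti₀ (by positivity)
    linarith
  have hSmono : Monotone S := by
    intro n m hnm
    have : (n:ℝ) ≤ m := Nat.cast_le.2 hnm
    exact Icc_subset_Icc (by linarith) (by linarith)
  have hGnmeas : ∀ n, Measurable (Gn n) := fun n =>
    Measurable.lintegral_prod_right (f := fun x t => g (t * x)) hjoint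
  have hGnmono : ∀ {n m : ℕ} (_ : n ≤ m) (x : ℝ), Gn n x ≤ Gn m x := by
    intro n m hnm x
    exact lintegral_mono' (Measure.restrict_mono (hTmono hnm) le_rfl) le_rfl
  have hGnleG : ∀ n x, Gn n x ≤ G x := fun n x =>
    lintegral_mono' (Measure.restrict_mono (hTsub n) le_rfl) le_rfl
  -- scaling bound
  have hscale : ∀ {t : ℝ}, 0 < t → ∀ s : Set ℝ,
      ∫⁻ x in s, g (t * x) ^ p ≤ ENNReal.ofReal t⁻¹ * I := by
    intro t ht s
    refine le_trans (setLIntegral_le_lintegral _ _) ?_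
    exact le_of_eq (hardy_scale (fun y => g y ^ p) hgp ht)
  -- finiteness of An
  have hAfin : ∀ n, An n ≠ ∞ := by
    intro n
    have hb : ∀ x : ℝ, Gn n x ^ p ≤ ∫⁻ t in T n, g (t * x) ^ p := by
      intro x
      have h1 : Gn n x ≤ (∫⁻ t in T n, g (t * x) ^ p) ^ (1/p) := by
        have h2 := ENNReal.lintegral_mul_le_Lp_mul_Lq (volume.restrict (T n)) hpq
          (f := fun t => g (t * x)) (g := fun _ => 1)
          (hg.comp (measurable_id.mul_const x)).aemeasurable aemeasurable_const
        simp only [Pi.mul_apply, mul_one, ENNReal.one_rpow, lintegral_const,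
          Measure.restrict_apply MeasurableSet.univ, univ_inter] at h2
        refine le_trans h2 ?_
        rw [one_mul]
        have hv1 : (volume (T n)) ^ (1/q) ≤ 1 := by
          refine ENNReal.rpow_le_one ?_ hpq.symm.one_div_nonneg
          rw [hTdef, Real.volume_Icc]
          exact ENNReal.ofReal_le_one.2 (sub_le_self _ (by positivity))
        calc (∫⁻ t in T n, g (t * x) ^ p) ^ (1/p) * (volume (T n)) ^ (1/q)
            ≤ (∫⁻ t in T n, g (t * x) ^ p) ^ (1/p) * 1 := mul_le_mul_right hv1 _
          _ = (∫⁻ t in T n, g (t * x) ^ p) ^ (1/p) := mul_one _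
      calc Gn n x ^ p ≤ ((∫⁻ t in T n, g (t * x) ^ p) ^ (1/p)) ^ p :=
            ENNReal.rpow_le_rpow h1 hp0.le
        _ = ∫⁻ t in T n, g (t * x) ^ p := by
            rw [← ENNReal.rpow_mul, one_div_mul_cancel hp0.ne', ENNReal.rpow_one]
    have hswap : ∫⁻ x in S n, ∫⁻ t in T n, g (t * x) ^ p ∂volume ∂volume
        = ∫⁻ t in T n, ∫⁻ x in S n, g (t * x) ^ p ∂volume ∂volume :=
      lintegral_lintegral_swap (f := fun x t => g (t * x) ^ p)
        ((hjoint.pow_const p)).aemeasurable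
    have : An n ≤ ∫⁻ t in T n, ENNReal.ofReal ((n:ℝ)+1) * I ∂volume := by
      calc An n ≤ ∫⁻ x in S n, ∫⁻ t in T n, g (t * x) ^ p := lintegral_mono hb
        _ = ∫⁻ t in T n, ∫⁻ x in S n, g (t * x) ^ p := hswap
        _ ≤ ∫⁻ t in T n, ENNReal.ofReal ((n:ℝ)+1) * I := by
            refine setLIntegral_mono' measurableSet_Icc ?_
            intro t ht
            refine le_trans (hscale (lt_of_lt_of_le (by positivity) ht.1) (S n)) ?_
            refine mul_le_mul_left (ENNReal.ofReal_le_ofReal ?_) _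
            rw [← (show ((n:ℝ)+1)⁻¹⁻¹ = (n:ℝ)+1 by rw [inv_inv])]
            exact inv_anti₀ (by positivity) ht.1
    refine ne_top_of_le_ne_top ?_ this
    rw [setLIntegral_const]
    exact ENNReal.mul_ne_top (ENNReal.mul_ne_top ENNReal.ofReal_ne_top hI)
      (lt_of_le_of_lt (measure_mono (hTsub n)) (by rw [Real.volume_Ioc]; exact ENNReal.ofReal_lt_top)).ne
  -- key Hölder bound
  have hkey : ∀ n, An n ≤ K * An n ^ (1/q) := by
    intro n
    have hrw : ∀ x : ℝ, Gn n x ^ p = ∫⁻ t in T n, g (t * x) * Gn n x ^ (p - 1) := by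
      intro x
      have hm : Measurable fun t : ℝ => g (t * x) := hg.comp (measurable_mul_const x)
      rw [lintegral_mul_const _ hm]
      have : Gn n x ^ p = Gn n x ^ (1 + (p - 1)) := by norm_num
      rw [this, ENNReal.rpow_add_of_nonneg _ _ zero_le_one (by linarith), ENNReal.rpow_one]
    have hswap : An n = ∫⁻ t in T n, ∫⁻ x in S n, g (t * x) * Gn n x ^ (p - 1) := by
      have : An n = ∫⁻ x in S n, ∫⁻ t in T n, g (t * x) * Gn n x ^ (p - 1) := by
        rw [hAndef]; exact lintegral_congr hrw
      rw [this]
      exact lintegral_lintegral_swap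
        ((hjoint.mul (((hGnmeas n).comp measurable_fst).pow_const _)).aemeasurable)
    have hinner : ∀ t ∈ T n, (∫⁻ x in S n, g (t * x) * Gn n x ^ (p - 1))
        ≤ ENNReal.ofReal (t ^ (-(1/p))) * (I ^ (1/p) * An n ^ (1/q)) := by
      intro t ht
      have ht0 : 0 < t := lt_of_lt_of_le (by positivity) ht.1
      have hH := ENNReal.lintegral_mul_le_Lp_mul_Lq (volume.restrict (S n)) hpq
        (f := fun x => g (t * x)) (g := fun x => Gn n x ^ (p - 1))
        (hg.comp (measurable_const_mul t)).aemeasurable ((hGnmeas n).pow_const _).aemeasurable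
      simp only [Pi.mul_apply] at hH
      refine le_trans hH ?_
      have h1 : (∫⁻ x in S n, g (t * x) ^ p) ^ (1/p)
          ≤ ENNReal.ofReal (t ^ (-(1/p))) * I ^ (1/p) := by
        refine le_trans (ENNReal.rpow_le_rpow (hscale ht0 (S n)) (by positivity)) ?_
        rw [ENNReal.mul_rpow_of_nonneg _ _ (by positivity),
          ENNReal.ofReal_rpow_of_pos (inv_pos.2 ht0), Real.inv_rpow ht0.le,
          ← Real.rpow_neg ht0.le]
      have h2 : (∫⁻ x in S n, (Gn n x ^ (p - 1)) ^ q) ^ (1/q) = An n ^ (1/q) := by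
        congr 1
        rw [hAndef]
        refine lintegral_congr fun x => ?_
        rw [← ENNReal.rpow_mul, hpq.sub_one_mul_conj]
      calc (∫⁻ x in S n, g (t * x) ^ p) ^ (1/p) * (∫⁻ x in S n, (Gn n x ^ (p - 1)) ^ q) ^ (1/q)
          ≤ (ENNReal.ofReal (t ^ (-(1/p))) * I ^ (1/p)) * An n ^ (1/q) :=
            mul_le_mul' h1 (le_of_eq h2)
        _ = ENNReal.ofReal (t ^ (-(1/p))) * (I ^ (1/p) * An n ^ (1/q)) := by ring
    calc An n = ∫⁻ t in T n, ∫⁻ x in S n, g (t * x) * Gn n x ^ (p - 1) := hswap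
      _ ≤ ∫⁻ t in T n, ENNReal.ofReal (t ^ (-(1/p))) * (I ^ (1/p) * An n ^ (1/q)) :=
          setLIntegral_mono' measurableSet_Icc hinner
      _ = (∫⁻ t in T n, ENNReal.ofReal (t ^ (-(1/p)))) * (I ^ (1/p) * An n ^ (1/q)) :=
          lintegral_mul_const _ ((measurable_id.pow_const _).ennreal_ofReal)
      _ ≤ ENNReal.ofReal (p / (p - 1)) * (I ^ (1/p) * An n ^ (1/q)) := by
          refine mul_le_mul_left ?_ _
          refine le_trans (lintegral_mono' (Measure.restrict_mono (hTsub n) le_rfl) le_rfl) ?_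
          exact le_of_eq (hardy_const p hp)
      _ = K * An n ^ (1/q) := by rw [hKdef]; ring
  -- division step
  have hAle : ∀ n, An n ≤ K ^ p := by
    intro n
    rcases eq_or_ne (An n) 0 with h0 | h0
    · rw [h0]; exact zero_le
    have hfin := hAfin n
    have hAq0 : An n ^ (1/q) ≠ 0 := by
      simp only [ne_eq, ENNReal.rpow_eq_zero_iff, not_or, not_and]
      exact ⟨fun h => absurd h h0, fun h => absurd h hfin⟩
    have hAqt : An n ^ (1/q) ≠ ∞ := by
      simp only [ne_eq, ENNReal.rpow_eq_top_iff, not_or, not_and]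
      constructor
      · intro h; exact absurd h h0
      · intro h; exact absurd h hfin
    have h1 : An n ^ (1/p) * An n ^ (1/q) ≤ K * An n ^ (1/q) := by
      have hsum : 1/p + 1/q = 1 := by rw [one_div, one_div]; exact hpq.inv_add_inv_eq_one
      rw [← ENNReal.rpow_add _ _ h0 hfin, hsum, ENNReal.rpow_one]
      exact hkey n
    have h2 : An n ^ (1/p) ≤ K := (ENNReal.mul_le_mul_iff_left hAq0 hAqt).1 h1
    calc An n = (An n ^ (1/p)) ^ p := by
          rw [← ENNReal.rpow_mul, one_div_mul_cancel hp0.ne', ENNReal.rpow_one]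
      _ ≤ K ^ p := ENNReal.rpow_le_rpow h2 hp0.le
  -- monotone convergence
  set F : ℕ → ℝ → ℝ≥0∞ := fun n => (S n).indicator fun x => Gn n x ^ p with hFdef
  have hFmeas : ∀ n, Measurable (F n) := fun n =>
    ((hGnmeas n).pow_const p).indicator measurableSet_Icc
  have hFmono : Monotone F := by
    intro n m hnm x
    by_cases hx : x ∈ S n
    · rw [hFdef]
      simp only
      rw [Set.indicator_of_mem hx, Set.indicator_of_mem (hSmono hnm hx)]
      exact ENNReal.rpow_le_rpow (hGnmono hnm x) hp0.le
    · rw [hFdef]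
      simp only
      rw [Set.indicator_of_notMem hx]
      exact zero_le
  have hGsup : ∀ x, G x ^ p ≤ ⨆ n, F n x := by
    intro x
    have hGx : G x = ⨆ n, Gn n x := by
      have hu : ∀ n, Measurable fun t => (T n).indicator (fun s : ℝ => g (s * x)) t :=
        fun n => (hg.comp (measurable_id.mul_const x)).indicator measurableSet_Icc
      have humono : Monotone fun n => (T n).indicator fun s : ℝ => g (s * x) := by
        intro n m hnm t
        by_cases htm : t ∈ T n
        · simp only
          rw [Set.indicator_of_mem htm, Set.indicator_of_mem (hTmono hnm htm)]
        · simp only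
          rw [Set.indicator_of_notMem htm]
          exact zero_le
      have hpt : ∀ t : ℝ, (⨆ n, (T n).indicator (fun s : ℝ => g (s * x)) t)
          = (Ioc (0:ℝ) 1).indicator (fun s => g (s * x)) t := by
        intro t
        by_cases ht : t ∈ Ioc (0:ℝ) 1
        · rw [Set.indicator_of_mem ht]
          obtain ⟨n, hn⟩ : ∃ n : ℕ, t ∈ T n := by
            obtain ⟨n, hn⟩ := exists_nat_one_div_lt ht.1
            exact ⟨n, ⟨by rw [inv_eq_one_div]; exact hn.le, ht.2⟩⟩
          refine le_antisymm (iSup_le fun m => Set.indicator_le_self _ _ t)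
            (le_iSup_of_le n (Set.indicator_of_mem hn (fun s : ℝ => g (s * x))).ge)
        · have hnot : ∀ n, t ∉ T n := fun n h => ht (hTsub n h)
          rw [Set.indicator_of_notMem ht]
          simp [Set.indicator_of_notMem, hnot]
      rw [hGdef]
      simp only
      rw [← lintegral_indicator measurableSet_Ioc]
      rw [lintegral_congr fun t => (hpt t).symm, lintegral_iSup hu humono]
      refine iSup_congr fun n => ?_
      rw [lintegral_indicator measurableSet_Icc]
    rw [hGx]
    have hsup_rpow : (⨆ n, Gn n x) ^ p = ⨆ n, Gn n x ^ p := by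
      have h := (ENNReal.orderIsoRpow p hp0).map_iSup fun n => Gn n x
      simp only [ENNReal.orderIsoRpow_apply] at h
      exact h
    rw [hsup_rpow]
    refine iSup_le fun n => ?_
    refine le_iSup_of_le (n + Nat.ceil |x|) ?_
    have hxS : x ∈ S (n + Nat.ceil |x|) := by
      have h1 : |x| ≤ (n + Nat.ceil |x| : ℝ) + 1 := by
        have := Nat.le_ceil |x|
        push_cast
        linarith [Nat.cast_nonneg (α := ℝ) n]
      rcases abs_le.1 h1 with ⟨hl, hr⟩
      exact ⟨by push_cast at hl ⊢; linarith, by push_cast at hr ⊢; linarith⟩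
    rw [hFdef]
    simp only
    rw [Set.indicator_of_mem hxS]
    exact ENNReal.rpow_le_rpow (hGnmono (Nat.le_add_right n _) x) hp0.le
  calc ∫⁻ x, G x ^ p ≤ ∫⁻ x, ⨆ n, F n x := lintegral_mono hGsup
    _ = ⨆ n, ∫⁻ x, F n x := lintegral_iSup hFmeas hFmono
    _ = ⨆ n, An n := by
        refine iSup_congr fun n => ?_
        rw [hFdef]
        simp only
        rw [lintegral_indicator measurableSet_Icc, hAndef]
    _ ≤ K ^ p := iSup_le hAle



/-- Hardy's integral inequality: `‖Sf‖_{L^p(ℝ)} ≤ p/(p-1) ‖f‖_{L^p(ℝ)}`, where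
`Sf(x) = (1/x) ∫₀ˣ f(t) dt = ∫₀¹ f(t x) dt`. -/
theorem hardy_inequality (p : ℝ) (hp : 1 < p) (f : ℝ → ℂ)
    (hf : MemLp f (ENNReal.ofReal p) volume) :
    eLpNorm (fun x : ℝ => ∫ t in Set.Icc (0 : ℝ) 1, f (t * x)) (ENNReal.ofReal p) volume ≤
      ENNReal.ofReal (p / (p - 1)) * eLpNorm f (ENNReal.ofReal p) volume := by
  have hp0 : (0:ℝ) < p := lt_trans one_pos hp
  have hpq : p.HolderConjugate (p/(p-1)) := Real.HolderConjugate.conjExponent hp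
  set P := ENNReal.ofReal p with hPdef
  have hP0 : P ≠ 0 := by
    simp only [hPdef, ne_eq, ENNReal.ofReal_eq_zero, not_le]
    exact hp0
  have hPt : P ≠ ∞ := ENNReal.ofReal_ne_top
  have hPtoReal : P.toReal = p := ENNReal.toReal_ofReal hp0.le
  set f' := hf.1.mk f with hf'def
  have hf'meas : StronglyMeasurable f' := hf.1.stronglyMeasurable_mk
  have hff' : f =ᵐ[volume] f' := hf.1.ae_eq_mk
  set g : ℝ → ℝ≥0∞ := fun y => (‖f' y‖₊ : ℝ≥0∞) with hgdef
  have hg : Measurable g := hf'meas.measurable.nnnorm.coe_nnreal_ennreal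
  have hI : ∫⁻ y, g y ^ p ≠ ∞ := by
    have h2 : eLpNorm f' P volume < ∞ := by
      rw [← eLpNorm_congr_ae hff']
      exact hf.2
    rw [eLpNorm_eq_lintegral_rpow_enorm_toReal hP0 hPt, hPtoReal] at h2
    intro hcon
    rw [hgdef] at hcon
    change ∫⁻ (x : ℝ), ‖f' x‖ₑ ^ p = ∞ at hcon
    rw [hcon, ENNReal.top_rpow_of_pos (by positivity : (0:ℝ) < 1/p)] at h2
    exact (lt_irrefl _ h2).elim
  have hae : ∀ᵐ x : ℝ, ∀ᵐ t ∂(volume.restrict (Ioc (0:ℝ) 1)), f (t * x) = f' (t * x) := by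
    obtain ⟨N, hsub, hmeas, hN0⟩ := exists_measurable_superset_of_null (ae_iff.1 hff')
    have hprod : (volume.prod (volume.restrict (Ioc (0:ℝ) 1)))
        {z : ℝ × ℝ | z.2 * z.1 ∈ N} = 0 := by
      have hms : MeasurableSet {z : ℝ × ℝ | z.2 * z.1 ∈ N} :=
        (measurable_snd.mul measurable_fst) hmeas
      rw [Measure.prod_apply_symm hms]
      have hz : ∀ t ∈ Ioc (0:ℝ) 1,
          volume ((fun x : ℝ => (x, t)) ⁻¹' {z : ℝ × ℝ | z.2 * z.1 ∈ N}) = 0 := by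
        intro t ht
        have heq : ((fun x : ℝ => (x, t)) ⁻¹' {z : ℝ × ℝ | z.2 * z.1 ∈ N})
            = (fun x : ℝ => t * x) ⁻¹' N := rfl
        rw [heq, Real.volume_preimage_mul_left ht.1.ne', hN0, mul_zero]
      rw [setLIntegral_congr_fun measurableSet_Ioc hz]
      simp
    have hae2 : ∀ᵐ z : ℝ × ℝ ∂(volume.prod (volume.restrict (Ioc (0:ℝ) 1))),
        z.2 * z.1 ∉ N := by
      rw [ae_iff]
      simpa only [not_not] using hprod
    filter_upwards [Measure.ae_ae_of_ae_prod hae2] with x hx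
    filter_upwards [hx] with t htn
    by_contra hne
    exact htn (hsub hne)
  set G : ℝ → ℝ≥0∞ := fun x => ∫⁻ t in Ioc (0:ℝ) 1, g (t * x) with hGdef
  have hbound : ∀ᵐ x : ℝ, (‖∫ t in Icc (0:ℝ) 1, f (t * x)‖₊ : ℝ≥0∞) ≤ G x := by
    filter_upwards [hae] with x hx
    calc (‖∫ t in Icc (0:ℝ) 1, f (t * x)‖₊ : ℝ≥0∞)
        ≤ ∫⁻ t in Icc (0:ℝ) 1, ‖f (t * x)‖₊ := enorm_integral_le_lintegral_enorm _
      _ = ∫⁻ t in Ioc (0:ℝ) 1, ‖f (t * x)‖₊ := by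
          rw [Measure.restrict_congr_set Ioc_ae_eq_Icc]
      _ = G x := by
          refine lintegral_congr_ae ?_
          filter_upwards [hx] with t ht
          rw [hgdef]
          simp only
          rw [ht]
  rw [eLpNorm_eq_lintegral_rpow_enorm_toReal hP0 hPt, hPtoReal]
  have hle : ∫⁻ x, (‖∫ t in Icc (0:ℝ) 1, f (t * x)‖₊ : ℝ≥0∞) ^ p ≤ ∫⁻ x, G x ^ p := by
    refine lintegral_mono_ae ?_
    filter_upwards [hbound] with x hx
    exact ENNReal.rpow_le_rpow hx hp0.le
  have hcore := hardy_core p (p/(p-1)) hp hpq g hg hI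
  have hfnorm : eLpNorm f P volume = (∫⁻ y, g y ^ p) ^ (1/p) := by
    rw [eLpNorm_congr_ae hff', eLpNorm_eq_lintegral_rpow_enorm_toReal hP0 hPt, hPtoReal]; rfl
  calc (∫⁻ x, (‖∫ t in Icc (0:ℝ) 1, f (t * x)‖₊ : ℝ≥0∞) ^ p) ^ (1/p)
      ≤ (∫⁻ x, G x ^ p) ^ (1/p) := ENNReal.rpow_le_rpow hle (by positivity)
    _ ≤ ((ENNReal.ofReal (p/(p-1)) * (∫⁻ y, g y ^ p) ^ (1/p)) ^ p) ^ (1/p) :=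
        ENNReal.rpow_le_rpow hcore (by positivity)
    _ = ENNReal.ofReal (p/(p-1)) * (∫⁻ y, g y ^ p) ^ (1/p) := by
        rw [← ENNReal.rpow_mul, mul_one_div_cancel hp0.ne', ENNReal.rpow_one]
    _ = ENNReal.ofReal (p/(p-1)) * eLpNorm f P volume := by rw [hfnorm]
end

section
/- Let ω : ℝ^d → [0,∞) be measurable, positive a.e., absolutely homogeneous of degree α > −d, locally integrable, and suppose ω satisfies the doubling property (there exists C with ω(B(x,2r)) ≤ C ω(B(x,r)) for all balls). Then the function x ↦ log|x| belongs to BMO(ω), i.e. sup over balls B of (1/ω(B)) ∫_B |log|x| − c_B| ω(x) dx is finite for suitable constants c_B. -/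
open MeasureTheory Metric Set ENNReal

/-- Integral of a weight over the unit sphere `S_d` with respect to the surface measure. -/
noncomputable def sphereInt (d : ℕ) (ω : EuclideanSpace ℝ (Fin d) → ℝ) : ℝ≥0∞ :=
  ∫⁻ θ : Metric.sphere (0 : EuclideanSpace ℝ (Fin d)) 1, ENNReal.ofReal (ω θ)
    ∂((volume : Measure (EuclideanSpace ℝ (Fin d))).toSphere)

/-- `ω ∈ W_α`: measurable, a.e. positive, absolutely homogeneous of degree `α`, with
finite positive integral over the unit sphere. -/
def memW (d : ℕ) (α : ℝ) (ω : EuclideanSpace ℝ (Fin d) → ℝ) : Prop :=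
  Measurable ω ∧ (∀ᵐ x : EuclideanSpace ℝ (Fin d), 0 < ω x) ∧
    (∀ t : ℝ, t ≠ 0 → ∀ x : EuclideanSpace ℝ (Fin d), ω (t • x) = |t| ^ α * ω x) ∧
    0 < sphereInt d ω ∧ sphereInt d ω < ⊤

/-- The norm of the weighted Lebesgue space `L^p_ω(ℝ^d)`. -/
noncomputable def wLpNorm (d : ℕ) (p : ℝ) (ω : EuclideanSpace ℝ (Fin d) → ℝ)
    (f : EuclideanSpace ℝ (Fin d) → ℂ) : ℝ≥0∞ :=
  (∫⁻ x, (‖f x‖₊ : ℝ≥0∞) ^ p * ENNReal.ofReal (ω x)) ^ (1 / p)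

/-- The weight of a ball: `ω(B(0,R)) = ∫_{B(0,R)} ω`. -/
noncomputable def wBall (d : ℕ) (ω : EuclideanSpace ℝ (Fin d) → ℝ) (R : ℝ) : ℝ≥0∞ :=
  ∫⁻ x in Metric.ball (0 : EuclideanSpace ℝ (Fin d)) R, ENNReal.ofReal (ω x)

/-- The norm of the weighted central Morrey space `Ḃ^{p,λ}_ω(ℝ^d)`. -/
noncomputable def morreyNorm (d : ℕ) (p lam : ℝ) (ω : EuclideanSpace ℝ (Fin d) → ℝ)
    (f : EuclideanSpace ℝ (Fin d) → ℂ) : ℝ≥0∞ :=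
  ⨆ (R : ℝ) (_ : 0 < R),
    ((wBall d ω R) ^ (-(1 + lam * p)) *
      ∫⁻ x in Metric.ball (0 : EuclideanSpace ℝ (Fin d)) R,
        (‖f x‖₊ : ℝ≥0∞) ^ p * ENNReal.ofReal (ω x)) ^ (1 / p)

lemma wscale {d : ℕ} {α : ℝ} {ω : EuclideanSpace ℝ (Fin d) → ℝ}
    (hmeas : Measurable ω)
    (hhom : ∀ t : ℝ, t ≠ 0 → ∀ x : EuclideanSpace ℝ (Fin d), ω (t • x) = |t| ^ α * ω x)
    {t : ℝ} (ht : 0 < t) (R : ℝ) :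
    (∫⁻ y in Metric.ball (0 : EuclideanSpace ℝ (Fin d)) (t * R), ENNReal.ofReal (ω y)) =
      ENNReal.ofReal (t ^ ((d : ℝ) + α)) *
        ∫⁻ y in Metric.ball (0 : EuclideanSpace ℝ (Fin d)) R, ENNReal.ofReal (ω y) := by
  let E := EuclideanSpace ℝ (Fin d)
  have hme : Measurable fun y : E => ENNReal.ofReal (ω y) := hmeas.ennreal_ofReal
  have hb : MeasurableSet (Metric.ball (0 : E) (t * R)) := measurableSet_ball
  have key := lintegral_map (μ := (volume : Measure E))
      (hme.indicator hb) (measurable_const_smul (M := ℝ) t)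
  rw [Measure.map_addHaar_smul (volume : Measure E) ht.ne'] at key
  rw [lintegral_smul_measure] at key
  have hpre : (fun x : E => t • x) ⁻¹' Metric.ball (0 : E) (t * R) = Metric.ball (0 : E) R := by
    ext z
    simp only [mem_preimage, mem_ball_zero_iff, norm_smul, Real.norm_eq_abs,
      abs_of_pos ht]
    constructor
    · intro h; nlinarith [norm_nonneg z]
    · intro h; nlinarith [norm_nonneg z]
  have hsub : (fun x : E => (Set.indicator (Metric.ball (0:E) (t*R))
        (fun y => ENNReal.ofReal (ω y))) (t • x))
      = fun x : E => (Set.indicator (Metric.ball (0:E) R)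
        (fun x => ENNReal.ofReal (t ^ α * ω x))) x := by
    funext x
    rw [show (Set.indicator (Metric.ball (0:E) (t*R))
        (fun y => ENNReal.ofReal (ω y))) (t • x)
      = (Set.indicator ((fun x : E => t • x) ⁻¹' Metric.ball (0:E) (t*R))
        (fun x => ENNReal.ofReal (ω (t • x)))) x from
        (Set.indicator_comp_right _ ).symm]
    rw [hpre]
    congr 1
    funext y
    rw [hhom t ht.ne' y, abs_of_pos ht]
  rw [hsub] at key
  rw [lintegral_indicator hb _, lintegral_indicator measurableSet_ball _] at key
  have hrw : ∀ᵐ y ∂((volume : Measure E).restrict (Metric.ball (0:E) R)),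
      ENNReal.ofReal (t ^ α * ω y) = ENNReal.ofReal (t ^ α) * ENNReal.ofReal (ω y) :=
    Filter.Eventually.of_forall fun y => ENNReal.ofReal_mul (Real.rpow_nonneg ht.le α)
  rw [lintegral_congr_ae hrw, lintegral_const_mul' _ _ ENNReal.ofReal_ne_top] at key
  have hfr : Module.finrank ℝ (EuclideanSpace ℝ (Fin d)) = d := finrank_euclideanSpace_fin
  rw [hfr] at key
  have ha : ENNReal.ofReal |((t:ℝ) ^ d)⁻¹| = (ENNReal.ofReal (t ^ (d:ℕ)))⁻¹ := by
    rw [abs_of_pos (by positivity), ENNReal.ofReal_inv_of_pos (by positivity)]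
  rw [ha] at key
  have h0 : ENNReal.ofReal (t ^ (d:ℕ)) ≠ 0 := by
    simp [ENNReal.ofReal_eq_zero, not_le]; positivity
  have htop : ENNReal.ofReal (t ^ (d:ℕ)) ≠ ⊤ := ENNReal.ofReal_ne_top
  have := congrArg (fun z => ENNReal.ofReal (t ^ (d:ℕ)) * z) key
  rw [smul_eq_mul, ← mul_assoc, ENNReal.mul_inv_cancel h0 htop, one_mul] at this
  rw [this, ← mul_assoc, ← ENNReal.ofReal_mul (by positivity)]
  congr 2
  rw [Real.rpow_add ht, Real.rpow_natCast]

/-- Pointwise bound: `ofReal (a*w) ≤ ofReal b * ofReal w` when `0 ≤ a ≤ b`. -/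
lemma ofReal_mul_le_of_le {a b w : ℝ} (ha : 0 ≤ a) (hab : a ≤ b) :
    ENNReal.ofReal (a * w) ≤ ENNReal.ofReal b * ENNReal.ofReal w := by
  rw [ENNReal.ofReal_mul ha]
  exact mul_le_mul_left (ENNReal.ofReal_le_ofReal hab) _

/-- If `ω ∈ W_α` (`α > -d`) is locally integrable and doubling, then `log|x| ∈ BMO(ω)`:
for every ball there is a constant whose mean oscillation is uniformly bounded. -/
theorem log_mem_BMO (d : ℕ) (hd : 0 < d) (α : ℝ) (hα : -(d : ℝ) < α)
    (ω : EuclideanSpace ℝ (Fin d) → ℝ) (hω : memW d α ω)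
    (hloc : LocallyIntegrable ω (volume : Measure (EuclideanSpace ℝ (Fin d))))
    (hdoub : ∃ C : ℝ≥0∞, C ≠ ⊤ ∧ ∀ (x : EuclideanSpace ℝ (Fin d)) (r : ℝ), 0 < r →
      (∫⁻ y in Metric.ball x (2 * r), ENNReal.ofReal (ω y)) ≤
        C * ∫⁻ y in Metric.ball x r, ENNReal.ofReal (ω y)) :
    ∃ M : ℝ≥0∞, M ≠ ⊤ ∧ ∀ (x : EuclideanSpace ℝ (Fin d)) (r : ℝ), 0 < r →
      ∃ c : ℝ,
        (∫⁻ y in Metric.ball x r, ENNReal.ofReal (|Real.log ‖y‖ - c| * ω y)) ≤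
          M * ∫⁻ y in Metric.ball x r, ENNReal.ofReal (ω y) := by
  obtain ⟨hmeas, hpos, hhom, hS0, hStop⟩ := hω
  obtain ⟨C, hCtop, hC⟩ := hdoub
  have hme : Measurable fun y : EuclideanSpace ℝ (Fin d) => ENNReal.ofReal (ω y) :=
    hmeas.ennreal_ofReal
  haveI : Nontrivial (EuclideanSpace ℝ (Fin d)) := by
    refine ⟨EuclideanSpace.single (⟨0, hd⟩ : Fin d) (1:ℝ), 0, fun h => ?_⟩
    have := congrArg (fun v : EuclideanSpace ℝ (Fin d) => v (⟨0, hd⟩ : Fin d)) h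
    simpa [EuclideanSpace.single_apply] using this
  have hdα : 0 < (d:ℝ) + α := by linarith
  set θ : ℝ := (2:ℝ)⁻¹ ^ ((d:ℝ) + α) with hθdef
  have hθ0 : 0 < θ := Real.rpow_pos_of_pos (by norm_num) _
  have hθ1 : θ < 1 := Real.rpow_lt_one (by norm_num) (by norm_num) hdα
  have hsummable : Summable (fun k : ℕ => (2 * ((k:ℝ)+1)) * θ ^ k) := by
    have h1 : Summable (fun n : ℕ => ((n:ℝ))^(1:ℕ) * θ ^ n) :=
      summable_pow_mul_geometric_of_norm_lt_one 1
        (by rw [Real.norm_eq_abs, abs_of_pos hθ0]; exact hθ1)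
    have h2 : Summable (fun n : ℕ => θ ^ n) :=
      summable_geometric_of_lt_one hθ0.le hθ1
    refine Summable.congr (((h1.mul_left 2).add (h2.mul_left 2))) fun n => by ring
  set S : ℝ := ∑' k : ℕ, (2 * ((k:ℝ)+1)) * θ ^ k with hSdef
  set C' : ℝ≥0∞ := C ⊔ 1 with hC'def
  have hC'top : C' ≠ ⊤ := by
    rw [hC'def]; exact (sup_lt_iff.mpr ⟨hCtop.lt_top, one_lt_top⟩).ne
  have hC' : ∀ (x : EuclideanSpace ℝ (Fin d)) (r : ℝ), 0 < r →
      (∫⁻ y in Metric.ball x (2 * r), ENNReal.ofReal (ω y)) ≤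
        C' * ∫⁻ y in Metric.ball x r, ENNReal.ofReal (ω y) :=
    fun x r hr => (hC x r hr).trans (mul_le_mul_left (le_sup_left) _)
  refine ⟨1 ⊔ (ENNReal.ofReal S * C' ^ 3), ?_, ?_⟩
  · exact (sup_lt_iff.mpr ⟨one_lt_top,
      ENNReal.mul_lt_top ENNReal.ofReal_lt_top (ENNReal.pow_lt_top hC'top.lt_top)⟩).ne
  intro x r hr
  rcases le_or_gt (2*r) ‖x‖ with hfar | hnear
  · -- far case : constant log ‖x‖
    refine ⟨Real.log ‖x‖, ?_⟩
    have hxpos : 0 < ‖x‖ := by linarith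
    have hb : ∀ y ∈ Metric.ball x r, |Real.log ‖y‖ - Real.log ‖x‖| ≤ 1 := by
      intro y hy
      have hdy : |‖y‖ - ‖x‖| ≤ dist y x := abs_norm_sub_norm_le _ _ |>.trans_eq
        (by rw [dist_eq_norm])
      have hdxy : dist y x < r := mem_ball.mp hy
      have h1 : ‖x‖ - r ≤ ‖y‖ := by
        have := abs_le.mp hdy; linarith [this.1]
      have h2 : ‖y‖ ≤ ‖x‖ + r := by
        have := abs_le.mp hdy; linarith [this.2]
      have hypos : 0 < ‖y‖ := by linarith
      rw [← Real.log_div hypos.ne' hxpos.ne']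
      set u := ‖y‖ / ‖x‖ with hu
      have hu0 : 0 < u := div_pos hypos hxpos
      have hu2 : u ≤ 3/2 := by
        rw [hu, div_le_iff₀ hxpos]; linarith
      have hu1 : 1/2 ≤ u := by
        rw [hu, le_div_iff₀ hxpos]; linarith
      rw [abs_le]
      constructor
      · have := Real.log_le_sub_one_of_pos (inv_pos.mpr hu0)
        have hinv : u⁻¹ ≤ 2 := by
          rw [inv_le_comm₀ hu0 (by norm_num)]; linarith
        rw [Real.log_inv] at this; linarith
      · have := Real.log_le_sub_one_of_pos hu0; linarith
    calc (∫⁻ y in Metric.ball x r, ENNReal.ofReal (|Real.log ‖y‖ - Real.log ‖x‖| * ω y))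
        ≤ ∫⁻ y in Metric.ball x r, ENNReal.ofReal 1 * ENNReal.ofReal (ω y) := by
          refine setLIntegral_mono (by fun_prop) fun y hy => ?_
          exact ofReal_mul_le_of_le (abs_nonneg _) (hb y hy)
      _ = ∫⁻ y in Metric.ball x r, ENNReal.ofReal (ω y) := by
          simp
      _ ≤ (1 ⊔ (ENNReal.ofReal S * C' ^ 3)) * ∫⁻ y in Metric.ball x r, ENNReal.ofReal (ω y) := by
          conv_lhs => rw [← one_mul (∫⁻ y in Metric.ball x r, ENNReal.ofReal (ω y))]
          exact mul_le_mul_left le_sup_left _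
  · -- near case : constant log r
    refine ⟨Real.log r, ?_⟩
    set A : ℕ → Set (EuclideanSpace ℝ (Fin d)) := fun k =>
      Metric.ball 0 (3*r*(2⁻¹:ℝ)^k) \ Metric.ball 0 (3*r*(2⁻¹:ℝ)^(k+1)) with hA
    -- covering
    have hcover : Metric.ball (0 : EuclideanSpace ℝ (Fin d)) (3*r)
        ⊆ {0} ∪ ⋃ k, A k := by
      intro y hy
      rcases eq_or_ne y 0 with rfl | hy0
      · exact Or.inl rfl
      right
      have hynorm : ‖y‖ < 3*r := mem_ball_zero_iff.mp hy
      have hy0' : 0 < ‖y‖ := norm_pos_iff.mpr hy0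
      haveI : DecidablePred (fun n : ℕ => 3*r*(2⁻¹:ℝ)^n ≤ ‖y‖) :=
        fun _ => Classical.propDecidable _
      have hex : ∃ n : ℕ, 3*r*(2⁻¹:ℝ)^n ≤ ‖y‖ := by
        obtain ⟨n, hn⟩ := exists_pow_lt_of_lt_one (div_pos hy0' (by linarith : (0:ℝ) < 3*r))
          (by norm_num : (2:ℝ)⁻¹ < 1)
        exact ⟨n, by rw [lt_div_iff₀ (by linarith : (0:ℝ) < 3*r)] at hn; nlinarith⟩
      set k := Nat.find hex with hk
      have hk0 : k ≠ 0 := by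
        intro h
        have := Nat.find_spec hex
        rw [← hk, h] at this
        simp at this; linarith
      refine mem_iUnion.mpr ⟨k - 1, ?_⟩
      constructor
      · exact mem_ball_zero_iff.mpr (lt_of_not_ge (Nat.find_min hex (by omega)))
      · intro hmem
        have h1 : 3*r*(2⁻¹:ℝ)^((k-1)+1) ≤ ‖y‖ := by
          have := Nat.find_spec hex
          rw [← hk] at this
          rwa [show (k-1)+1 = k by omega]
        exact absurd (mem_ball_zero_iff.mp hmem) (not_lt.mpr h1)
    -- annulus bound
    have hann : ∀ k : ℕ, (∫⁻ y in A k, ENNReal.ofReal (|Real.log ‖y‖ - Real.log r| * ω y))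
        ≤ ENNReal.ofReal (2*((k:ℝ)+1)*θ^k) *
          ∫⁻ y in Metric.ball (0 : EuclideanSpace ℝ (Fin d)) (3*r), ENNReal.ofReal (ω y) := by
      intro k
      have hbound : ∀ y ∈ A k, |Real.log ‖y‖ - Real.log r| ≤ 2*((k:ℝ)+1) := by
        intro y hy
        obtain ⟨hy1, hy2⟩ := hy
        have hyub : ‖y‖ < 3*r*(2⁻¹:ℝ)^k := mem_ball_zero_iff.mp hy1
        have hylb : 3*r*(2⁻¹:ℝ)^(k+1) ≤ ‖y‖ := not_lt.mp (fun h => hy2 (mem_ball_zero_iff.mpr h))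
        have hy0 : 0 < ‖y‖ := lt_of_lt_of_le (by positivity) hylb
        rw [← Real.log_div hy0.ne' hr.ne']
        set u := ‖y‖ / r with hu
        have hu0 : 0 < u := div_pos hy0 hr
        have huu : u < 3 := by
          rw [hu, div_lt_iff₀ hr]
          calc ‖y‖ < 3*r*(2⁻¹:ℝ)^k := hyub
            _ ≤ 3*r*1 := by
                have : ((2:ℝ)⁻¹)^k ≤ 1 := pow_le_one₀ (by norm_num) (by norm_num)
                nlinarith
            _ = 3*r := by ring
        have hul : ((2:ℝ)^(k+1))⁻¹ ≤ u := by
          rw [hu, le_div_iff₀ hr, ← inv_pow]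
          nlinarith [pow_pos (show (0:ℝ) < 2⁻¹ by norm_num) (k+1)]
        have hk1 : (1:ℝ) ≤ (k:ℝ)+1 := by linarith [Nat.cast_nonneg (α := ℝ) k]
        rw [abs_le]
        constructor
        · -- lower bound
          have hinv : u⁻¹ ≤ (2:ℝ)^(k+1) :=
            (inv_le_comm₀ hu0 (by positivity)).mpr hul
          have hlog : Real.log u⁻¹ ≤ Real.log ((2:ℝ)^(k+1)) :=
            Real.log_le_log (inv_pos.mpr hu0) hinv
          rw [Real.log_inv, Real.log_pow] at hlog
          have hlog2 : Real.log 2 ≤ 1 := by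
            have := Real.log_le_sub_one_of_pos (by norm_num : (0:ℝ) < 2); linarith
          have : -Real.log u ≤ ((k:ℝ)+1) * 1 := by
            calc -Real.log u ≤ ((k+1:ℕ):ℝ) * Real.log 2 := hlog
              _ ≤ ((k:ℝ)+1) * 1 := by
                  push_cast
                  exact mul_le_mul_of_nonneg_left hlog2 (by positivity)
          linarith
        · have := Real.log_le_sub_one_of_pos hu0
          linarith
      calc (∫⁻ y in A k, ENNReal.ofReal (|Real.log ‖y‖ - Real.log r| * ω y))
          ≤ ∫⁻ y in A k, ENNReal.ofReal (2*((k:ℝ)+1)) * ENNReal.ofReal (ω y) := by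
            refine setLIntegral_mono (by fun_prop) fun y hy => ?_
            exact ofReal_mul_le_of_le (abs_nonneg _) (hbound y hy)
        _ = ENNReal.ofReal (2*((k:ℝ)+1)) * ∫⁻ y in A k, ENNReal.ofReal (ω y) :=
            lintegral_const_mul' _ _ ENNReal.ofReal_ne_top
        _ ≤ ENNReal.ofReal (2*((k:ℝ)+1)) *
              ∫⁻ y in Metric.ball (0 : EuclideanSpace ℝ (Fin d)) ((2⁻¹:ℝ)^k * (3*r)),
                ENNReal.ofReal (ω y) := by
            refine mul_le_mul_right ?_ _
            refine lintegral_mono' (Measure.restrict_mono ?_ le_rfl) le_rfl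
            refine diff_subset.trans ?_
            intro z hz
            rw [mem_ball_zero_iff] at hz ⊢
            calc ‖z‖ < 3*r*(2⁻¹:ℝ)^k := hz
              _ = (2⁻¹:ℝ)^k * (3*r) := by ring
        _ = ENNReal.ofReal (2*((k:ℝ)+1)) * (ENNReal.ofReal (θ^k) *
              ∫⁻ y in Metric.ball (0 : EuclideanSpace ℝ (Fin d)) (3*r),
                ENNReal.ofReal (ω y)) := by
            rw [wscale hmeas hhom (by positivity) (3*r)]
            congr 3
            rw [← Real.rpow_natCast ((2:ℝ)⁻¹) k, ← Real.rpow_natCast θ k, hθdef,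
              ← Real.rpow_mul (by norm_num), ← Real.rpow_mul (by norm_num), mul_comm]
        _ = ENNReal.ofReal (2*((k:ℝ)+1)*θ^k) *
              ∫⁻ y in Metric.ball (0 : EuclideanSpace ℝ (Fin d)) (3*r),
                ENNReal.ofReal (ω y) := by
            rw [← mul_assoc, ← ENNReal.ofReal_mul (by positivity)]
    -- the weight of the big ball is controlled
    have hball : (∫⁻ y in Metric.ball (0 : EuclideanSpace ℝ (Fin d)) (3*r),
          ENNReal.ofReal (ω y))
        ≤ C'^3 * ∫⁻ y in Metric.ball x r, ENNReal.ofReal (ω y) := by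
      have hsub8 : Metric.ball (0 : EuclideanSpace ℝ (Fin d)) (3*r)
          ⊆ Metric.ball x (2*(4*r)) := by
        intro y hy
        rw [mem_ball_zero_iff] at hy
        rw [mem_ball, dist_eq_norm]
        calc ‖y - x‖ ≤ ‖y‖ + ‖x‖ := norm_sub_le _ _
          _ < 3*r + 2*r := by linarith
          _ ≤ 2*(4*r) := by linarith
      calc (∫⁻ y in Metric.ball (0 : EuclideanSpace ℝ (Fin d)) (3*r), ENNReal.ofReal (ω y))
          ≤ ∫⁻ y in Metric.ball x (2*(4*r)), ENNReal.ofReal (ω y) :=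
            lintegral_mono' (Measure.restrict_mono hsub8 le_rfl) le_rfl
        _ ≤ C' * ∫⁻ y in Metric.ball x (4*r), ENNReal.ofReal (ω y) := hC' x (4*r) (by linarith)
        _ ≤ C' * (C' * ∫⁻ y in Metric.ball x (2*r), ENNReal.ofReal (ω y)) := by
            refine mul_le_mul_right ?_ _
            have := hC' x (2*r) (by linarith)
            rwa [show (2:ℝ)*(2*r) = 4*r by ring] at this
        _ ≤ C' * (C' * (C' * ∫⁻ y in Metric.ball x r, ENNReal.ofReal (ω y))) := by
            exact mul_le_mul_right (mul_le_mul_right (hC' x r hr) _) _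
        _ = C'^3 * ∫⁻ y in Metric.ball x r, ENNReal.ofReal (ω y) := by ring
    -- put everything together
    have hsingleton : (volume : Measure (EuclideanSpace ℝ (Fin d))) {0} = 0 :=
      measure_singleton 0
    calc (∫⁻ y in Metric.ball x r, ENNReal.ofReal (|Real.log ‖y‖ - Real.log r| * ω y))
        ≤ ∫⁻ y in Metric.ball (0 : EuclideanSpace ℝ (Fin d)) (3*r),
            ENNReal.ofReal (|Real.log ‖y‖ - Real.log r| * ω y) := by
          refine lintegral_mono' (Measure.restrict_mono ?_ le_rfl) le_rfl
          intro y hy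
          rw [mem_ball] at hy
          rw [mem_ball_zero_iff]
          calc ‖y‖ = ‖(y - x) + x‖ := by rw [sub_add_cancel]
            _ ≤ ‖y - x‖ + ‖x‖ := norm_add_le _ _
            _ < r + 2*r := by
                rw [dist_eq_norm] at hy; linarith
            _ = 3*r := by ring
      _ ≤ ∫⁻ y in ({0} : Set (EuclideanSpace ℝ (Fin d))) ∪ ⋃ k, A k,
            ENNReal.ofReal (|Real.log ‖y‖ - Real.log r| * ω y) :=
          lintegral_mono' (Measure.restrict_mono hcover le_rfl) le_rfl
      _ ≤ (∫⁻ y in ({0} : Set (EuclideanSpace ℝ (Fin d))),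
            ENNReal.ofReal (|Real.log ‖y‖ - Real.log r| * ω y)) +
          ∫⁻ y in ⋃ k, A k, ENNReal.ofReal (|Real.log ‖y‖ - Real.log r| * ω y) :=
          lintegral_union_le _ _ _
      _ = ∫⁻ y in ⋃ k, A k, ENNReal.ofReal (|Real.log ‖y‖ - Real.log r| * ω y) := by
          rw [setLIntegral_measure_zero _ _ hsingleton, zero_add]
      _ ≤ ∑' k, ∫⁻ y in A k, ENNReal.ofReal (|Real.log ‖y‖ - Real.log r| * ω y) :=
          lintegral_iUnion_le _ _
      _ ≤ ∑' k : ℕ, ENNReal.ofReal (2*((k:ℝ)+1)*θ^k) *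
            ∫⁻ y in Metric.ball (0 : EuclideanSpace ℝ (Fin d)) (3*r), ENNReal.ofReal (ω y) :=
          ENNReal.tsum_le_tsum hann
      _ = ENNReal.ofReal S *
            ∫⁻ y in Metric.ball (0 : EuclideanSpace ℝ (Fin d)) (3*r), ENNReal.ofReal (ω y) := by
          rw [ENNReal.tsum_mul_right, hSdef,
            ENNReal.ofReal_tsum_of_nonneg (fun n => by positivity) hsummable]
      _ ≤ ENNReal.ofReal S * (C'^3 * ∫⁻ y in Metric.ball x r, ENNReal.ofReal (ω y)) :=
          mul_le_mul_right hball _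
      _ = (ENNReal.ofReal S * C'^3) * ∫⁻ y in Metric.ball x r, ENNReal.ofReal (ω y) := by
          ring
      _ ≤ (1 ⊔ (ENNReal.ofReal S * C' ^ 3)) * ∫⁻ y in Metric.ball x r, ENNReal.ofReal (ω y) :=
          mul_le_mul_left le_sup_right _
end

section
/- Let 1 < p < ∞, −1/p ≤ λ < 0, and ω ∈ W_α with α > −d. Then the weighted central Morrey space Ḃ^{p,λ}_ω(ℝ^d), with norm ‖f‖ = sup_{R>0} (ω(B(0,R))^{−(1+λp)} ∫_{B(0,R)} |f|^p ω dx)^{1/p}, is a normed space, and if λ < −1/p then Ḃ^{p,λ}_ω(ℝ^d) = {0}. -/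
open MeasureTheory Metric Set ENNReal

/-- Polar-coordinates computation of the weight of a ball: for an `α`-homogeneous weight,
`ω(B(0,R)) = (∫_{S} ω) · R^(α+d)/(α+d)`. -/
theorem wBall_eq (d : ℕ) (hd : 0 < d) (α : ℝ) (hα : -(d : ℝ) < α)
    (ω : EuclideanSpace ℝ (Fin d) → ℝ) (hm : Measurable ω)
    (hh : ∀ t : ℝ, t ≠ 0 → ∀ x, ω (t • x) = |t| ^ α * ω x)
    (R : ℝ) (hR : 0 < R) :
    wBall d ω R = sphereInt d ω * ENNReal.ofReal (R ^ (α + d) / (α + d)) := by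
  have hfr : Module.finrank ℝ (EuclideanSpace ℝ (Fin d)) = d := finrank_euclideanSpace_fin
  haveI hnt : Nontrivial (EuclideanSpace ℝ (Fin d)) :=
    Module.nontrivial_of_finrank_pos (hfr ▸ hd)
  set μ : Measure (EuclideanSpace ℝ (Fin d)) := volume with hμ
  set G : Metric.sphere (0 : EuclideanSpace ℝ (Fin d)) 1 × Set.Ioi (0 : ℝ) → ℝ≥0∞ :=
    fun y => ENNReal.ofReal (ω y.1) * (if y.2.1 < R then ENNReal.ofReal (y.2.1 ^ α) else 0)
    with hG
  have key : wBall d ω R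
      = ∫⁻ y, G y ∂((μ.toSphere).prod
          (.volumeIoiPow (Module.finrank ℝ (EuclideanSpace ℝ (Fin d)) - 1))) := by
    rw [wBall]
    have h0 : ∫⁻ x in Metric.ball (0 : EuclideanSpace ℝ (Fin d)) R, ENNReal.ofReal (ω x) ∂μ
        = ∫⁻ x : ({0}ᶜ : Set (EuclideanSpace ℝ (Fin d))),
            (Metric.ball (0 : EuclideanSpace ℝ (Fin d)) R).indicator
              (fun x => ENNReal.ofReal (ω x)) x ∂(μ.comap (↑)) := by
      rw [lintegral_subtype_comap (measurableSet_singleton (0 : EuclideanSpace ℝ (Fin d))).compl,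
        restrict_compl_singleton, lintegral_indicator measurableSet_ball]
    rw [h0, ← (μ.measurePreserving_homeomorphUnitSphereProd).lintegral_comp_emb
      (Homeomorph.measurableEmbedding _) G]
    refine lintegral_congr fun x => ?_
    have hx : ((homeomorphUnitSphereProd (EuclideanSpace ℝ (Fin d)) x).2 : ℝ) = ‖x.1‖ := by simp
    have hxn : (0:ℝ) < ‖x.1‖ := norm_pos_iff.2 x.2
    rw [hG]
    simp only [hx]
    by_cases hlt : ‖x.1‖ < R
    · rw [indicator_of_mem (by simpa [mem_ball_zero_iff] using hlt), if_pos hlt]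
      have h1 : ((homeomorphUnitSphereProd (EuclideanSpace ℝ (Fin d)) x).1
          : EuclideanSpace ℝ (Fin d)) = ‖x.1‖⁻¹ • x.1 := by simp
      rw [h1, hh _ (by positivity), abs_of_pos (by positivity),
        ← ENNReal.ofReal_mul' (by positivity)]
      congr 1
      rw [Real.inv_rpow hxn.le]
      have hne := (Real.rpow_pos_of_pos hxn α).ne'
      field_simp
    · rw [indicator_of_notMem (by simpa [mem_ball_zero_iff] using hlt), if_neg hlt, mul_zero]
  set s : ℝ := α + d - 1 with hs
  have hs1 : -1 < s := by simp only [hs]; linarith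
  have hrad0 : ∫⁻ a in Set.Ioi (0:ℝ),
      (ENNReal.ofReal (a ^ (d-1)) * if a < R then ENNReal.ofReal (a ^ α) else 0)
      = ENNReal.ofReal (R ^ (α + d) / (α + d)) := by
    have step1 : ∫⁻ a in Set.Ioi (0:ℝ),
        (ENNReal.ofReal (a ^ (d-1)) * if a < R then ENNReal.ofReal (a ^ α) else 0)
        = ∫⁻ a in Set.Ioi (0:ℝ), (Set.Iio R).indicator (fun a => ENNReal.ofReal (a ^ s)) a := by
      refine setLIntegral_congr_fun measurableSet_Ioi (fun a ha => ?_)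
      have ha' : (0:ℝ) < a := ha
      by_cases h : a < R
      · rw [if_pos h, indicator_of_mem (mem_Iio.2 h), ← ENNReal.ofReal_mul (by positivity)]
        congr 1
        rw [← Real.rpow_natCast a (d-1), Nat.cast_sub hd, Nat.cast_one,
          ← Real.rpow_add ha']
        congr 1
        ring
      · rw [if_neg h, indicator_of_notMem (by simpa using h), mul_zero]
    rw [step1, lintegral_indicator measurableSet_Iio, Measure.restrict_restrict measurableSet_Iio,
      Set.Iio_inter_Ioi]
    have hint : IntegrableOn (fun a : ℝ => a ^ s) (Set.Ioo 0 R) volume :=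
      (intervalIntegral.intervalIntegrable_rpow' hs1).1.mono_set Set.Ioo_subset_Ioc_self
    have hnn : 0 ≤ᵐ[volume.restrict (Set.Ioo 0 R)] fun a : ℝ => a ^ s := by
      filter_upwards [ae_restrict_mem measurableSet_Ioo] with a ha
      exact Real.rpow_nonneg ha.1.le _
    rw [← ofReal_integral_eq_lintegral_ofReal hint hnn,
      Measure.restrict_congr_set Ioo_ae_eq_Ioc, ← intervalIntegral.integral_of_le hR.le,
      integral_rpow (Or.inl hs1)]
    congr 1
    rw [Real.zero_rpow (by linarith), hs]
    ring_nf
  have hrad : ∫⁻ (r : Set.Ioi (0:ℝ)), (if (r:ℝ) < R then ENNReal.ofReal ((r:ℝ) ^ α) else 0)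
      ∂(Measure.volumeIoiPow (Module.finrank ℝ (EuclideanSpace ℝ (Fin d)) - 1))
      = ENNReal.ofReal (R ^ (α + d) / (α + d)) := by
    rw [hfr, Measure.volumeIoiPow,
      lintegral_withDensity_eq_lintegral_mul _ (by fun_prop)
        (Measurable.ite (measurableSet_lt (measurable_subtype_coe) measurable_const)
          (by fun_prop) measurable_const)]
    exact (lintegral_subtype_comap measurableSet_Ioi
      (fun a : ℝ => ENNReal.ofReal (a ^ (d-1)) * if a < R then ENNReal.ofReal (a ^ α) else 0)).trans
      hrad0
  have hmul := lintegral_prod_mul (μ := μ.toSphere)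
      (ν := Measure.volumeIoiPow (Module.finrank ℝ (EuclideanSpace ℝ (Fin d)) - 1))
      (f := fun θ : Metric.sphere (0 : EuclideanSpace ℝ (Fin d)) 1 => ENNReal.ofReal (ω θ))
      (g := fun r : Set.Ioi (0:ℝ) => if (r:ℝ) < R then ENNReal.ofReal ((r:ℝ) ^ α) else 0)
      (((ENNReal.measurable_ofReal.comp hm).comp measurable_subtype_coe).aemeasurable)
      ((Measurable.ite (measurableSet_lt (measurable_subtype_coe) measurable_const)
        (by fun_prop) measurable_const).aemeasurable)
  rw [key, hG, sphereInt]
  exact hmul.trans (by rw [hrad])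

/-- If the weighted `p`-integral of `f` vanishes over every ball centered at the origin,
then `f = 0` a.e. -/
theorem ae_zero_of_balls {d : ℕ} (ω : EuclideanSpace ℝ (Fin d) → ℝ) (hm : Measurable ω)
    (hpos : ∀ᵐ x : EuclideanSpace ℝ (Fin d), 0 < ω x) {p : ℝ}
    (f : EuclideanSpace ℝ (Fin d) → ℂ) (hfm : AEMeasurable f volume)
    (h : ∀ R : ℝ, 0 < R → (∫⁻ x in Metric.ball (0 : EuclideanSpace ℝ (Fin d)) R,
      (‖f x‖₊ : ℝ≥0∞) ^ p * ENNReal.ofReal (ω x)) = 0) :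
    f =ᵐ[volume] 0 := by
  have hb : ∀ n : ℕ, volume ({x : EuclideanSpace ℝ (Fin d) | f x ≠ 0}
      ∩ Metric.ball 0 (n+1)) = 0 := by
    intro n
    have h0 := h (n+1) (by positivity)
    have hg : AEMeasurable (fun x => (‖f x‖₊ : ℝ≥0∞) ^ p * ENNReal.ofReal (ω x))
        (volume.restrict (Metric.ball (0 : EuclideanSpace ℝ (Fin d)) (n+1))) := by
      exact ((hfm.nnnorm.coe_nnreal_ennreal.pow_const p).mul
        ((ENNReal.measurable_ofReal.comp hm).aemeasurable)).restrict
    have h1 := (lintegral_eq_zero_iff' hg).1 h0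
    have h2 : ∀ᵐ x ∂(volume.restrict (Metric.ball (0 : EuclideanSpace ℝ (Fin d)) (n+1))),
        f x = 0 := by
      filter_upwards [h1, ae_restrict_of_ae hpos] with x hx hωx
      rcases mul_eq_zero.1 hx with h' | h'
      · rcases ENNReal.rpow_eq_zero_iff.1 h' with ⟨h'', _⟩ | ⟨h'', _⟩
        · simpa using h''
        · exact absurd h'' (by simp)
      · exact absurd h' (ENNReal.ofReal_pos.2 hωx).ne'
    have h3 := ae_iff.1 h2
    rwa [Measure.restrict_apply' measurableSet_ball] at h3
  have hsub : {x : EuclideanSpace ℝ (Fin d) | f x ≠ 0} ⊆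
      ⋃ n : ℕ, ({x | f x ≠ 0} ∩ Metric.ball 0 (n+1)) := fun x hx =>
    Set.mem_iUnion.2 ⟨⌊‖x‖⌋₊, hx, by
      simpa [mem_ball_zero_iff] using Nat.lt_floor_add_one ‖x‖⟩
  have : ∀ᵐ x, f x = 0 := ae_iff.2 (measure_mono_null hsub (measure_iUnion_null hb))
  filter_upwards [this] with x hx
  simp [hx]

/-- For `1 < p < ∞`, `-1/p ≤ λ < 0` and `ω ∈ W_α` (`α > -d`), the weighted central
Morrey functional is a norm (homogeneous, subadditive, vanishing exactly on a.e.-null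
functions); and for `λ < -1/p` the space `Ḃ^{p,λ}_ω(ℝ^d)` is trivial. -/
theorem morrey_normed_and_trivial (d : ℕ) (hd : 0 < d) (α : ℝ) (hα : -(d : ℝ) < α)
    (ω : EuclideanSpace ℝ (Fin d) → ℝ) (hω : memW d α ω) (p : ℝ) (hp : 1 < p) :
    (∀ lam : ℝ, -(1 / p) ≤ lam → lam < 0 →
      (∀ (c : ℂ) (f : EuclideanSpace ℝ (Fin d) → ℂ), AEMeasurable f →
        morreyNorm d p lam ω (fun x => c * f x) = (‖c‖₊ : ℝ≥0∞) * morreyNorm d p lam ω f) ∧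
      (∀ f g : EuclideanSpace ℝ (Fin d) → ℂ, AEMeasurable f → AEMeasurable g →
        morreyNorm d p lam ω (fun x => f x + g x) ≤
          morreyNorm d p lam ω f + morreyNorm d p lam ω g) ∧
      (∀ f : EuclideanSpace ℝ (Fin d) → ℂ, AEMeasurable f →
        (morreyNorm d p lam ω f = 0 ↔ f =ᵐ[volume] 0))) ∧
    (∀ lam : ℝ, lam < -(1 / p) →
      ∀ f : EuclideanSpace ℝ (Fin d) → ℂ, AEMeasurable f →
        morreyNorm d p lam ω f ≠ ⊤ → f =ᵐ[volume] 0) := by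
  obtain ⟨hm, hpos, hh, hc0, hctop⟩ := hω
  have hp0 : (0:ℝ) < p := lt_trans one_pos hp
  have hαd : (0:ℝ) < α + d := by linarith
  have hweq : ∀ R : ℝ, 0 < R →
      wBall d ω R = sphereInt d ω * ENNReal.ofReal (R ^ (α + d) / (α + d)) :=
    fun R hR => wBall_eq d hd α hα ω hm hh R hR
  have hwpos : ∀ R : ℝ, 0 < R → wBall d ω R ≠ 0 := by
    intro R hR
    rw [hweq R hR]
    exact (ENNReal.mul_pos hc0.ne' (by positivity)).ne'
  have hwtop : ∀ R : ℝ, 0 < R → wBall d ω R ≠ ⊤ := by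
    intro R hR
    rw [hweq R hR]
    exact (ENNReal.mul_lt_top hctop ENNReal.ofReal_lt_top).ne
  constructor
  · intro lam hl1 _
    refine ⟨?_, ?_, ?_⟩
    · -- homogeneity
      intro c f _
      rw [morreyNorm, morreyNorm]
      have hterm : ∀ R : ℝ,
          ((wBall d ω R) ^ (-(1 + lam * p)) *
            ∫⁻ x in Metric.ball (0 : EuclideanSpace ℝ (Fin d)) R,
              (‖c * f x‖₊ : ℝ≥0∞) ^ p * ENNReal.ofReal (ω x)) ^ (1 / p)
          = (‖c‖₊ : ℝ≥0∞) * ((wBall d ω R) ^ (-(1 + lam * p)) *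
            ∫⁻ x in Metric.ball (0 : EuclideanSpace ℝ (Fin d)) R,
              (‖f x‖₊ : ℝ≥0∞) ^ p * ENNReal.ofReal (ω x)) ^ (1 / p) := by
        intro R
        have h1 : ∀ x : EuclideanSpace ℝ (Fin d),
            (‖c * f x‖₊ : ℝ≥0∞) ^ p * ENNReal.ofReal (ω x)
            = (‖c‖₊ : ℝ≥0∞) ^ p * ((‖f x‖₊ : ℝ≥0∞) ^ p * ENNReal.ofReal (ω x)) := by
          intro x
          rw [nnnorm_mul, ENNReal.coe_mul, ENNReal.mul_rpow_of_nonneg _ _ hp0.le, mul_assoc]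
        simp_rw [h1]
        rw [lintegral_const_mul' _ _
            (ENNReal.rpow_lt_top_of_nonneg hp0.le ENNReal.coe_ne_top).ne,
          mul_left_comm, ENNReal.mul_rpow_of_nonneg _ _ (by positivity),
          ← ENNReal.rpow_mul, mul_one_div_cancel hp0.ne', ENNReal.rpow_one]
      simp_rw [hterm, ← ENNReal.mul_iSup]
    · -- triangle inequality
      intro f g hf hg
      rw [morreyNorm]
      refine iSup_le fun R => iSup_le fun hR => ?_
      set ν := (volume.restrict (Metric.ball (0 : EuclideanSpace ℝ (Fin d)) R)).withDensity
        (fun x => ENNReal.ofReal (ω x)) with hν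
      have hac : ν ≪ volume :=
        (withDensity_absolutelyContinuous _ _).trans
          (Measure.absolutelyContinuous_of_le Measure.restrict_le_self)
      have hconv : ∀ h : EuclideanSpace ℝ (Fin d) → ℂ, AEMeasurable h volume →
          (∫⁻ x in Metric.ball (0 : EuclideanSpace ℝ (Fin d)) R,
            (‖h x‖₊ : ℝ≥0∞) ^ p * ENNReal.ofReal (ω x))
          = ∫⁻ x, (‖h x‖₊ : ℝ≥0∞) ^ p ∂ν := by
        intro h hh'
        rw [hν, lintegral_withDensity_eq_lintegral_mul₀ (f := fun x => ENNReal.ofReal (ω x))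
          (hm.ennreal_ofReal.aemeasurable.restrict)
          ((hh'.nnnorm.coe_nnreal_ennreal.pow_const p).restrict)]
        exact lintegral_congr fun x => (mul_comm _ _)
      have hfν : AEMeasurable (fun x => (‖f x‖₊ : ℝ≥0∞)) ν := hf.nnnorm.coe_nnreal_ennreal.mono_ac hac
      have hgν : AEMeasurable (fun x => (‖g x‖₊ : ℝ≥0∞)) ν := hg.nnnorm.coe_nnreal_ennreal.mono_ac hac
      have mink := ENNReal.lintegral_Lp_add_le hfν hgν hp.le
      have mono1 : (∫⁻ x, (‖f x + g x‖₊ : ℝ≥0∞) ^ p ∂ν)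
          ≤ ∫⁻ x, ((fun x => (‖f x‖₊ : ℝ≥0∞)) + fun x => (‖g x‖₊ : ℝ≥0∞)) x ^ p ∂ν :=
        lintegral_mono fun x => ENNReal.rpow_le_rpow (by
          simp only [Pi.add_apply]
          exact_mod_cast nnnorm_add_le (f x) (g x)) hp0.le
      calc ((wBall d ω R) ^ (-(1 + lam * p)) *
          ∫⁻ x in Metric.ball (0 : EuclideanSpace ℝ (Fin d)) R,
            (‖f x + g x‖₊ : ℝ≥0∞) ^ p * ENNReal.ofReal (ω x)) ^ (1 / p)
          ≤ ((wBall d ω R) ^ (-(1 + lam * p)) *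
            ∫⁻ x, ((fun x => (‖f x‖₊ : ℝ≥0∞)) + fun x => (‖g x‖₊ : ℝ≥0∞)) x ^ p ∂ν) ^ (1 / p) := by
            refine ENNReal.rpow_le_rpow (mul_le_mul_right ?_ _) (by positivity)
            rw [hconv (fun x => f x + g x) (hf.add hg)]
            exact mono1
        _ = ((wBall d ω R) ^ (-(1 + lam * p))) ^ (1/p) *
            (∫⁻ x, ((fun x => (‖f x‖₊ : ℝ≥0∞)) + fun x => (‖g x‖₊ : ℝ≥0∞)) x ^ p ∂ν) ^ (1 / p) :=
            ENNReal.mul_rpow_of_nonneg _ _ (by positivity)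
        _ ≤ ((wBall d ω R) ^ (-(1 + lam * p))) ^ (1/p) *
            ((∫⁻ x, (‖f x‖₊ : ℝ≥0∞) ^ p ∂ν) ^ (1/p) + (∫⁻ x, (‖g x‖₊ : ℝ≥0∞) ^ p ∂ν) ^ (1/p)) :=
            mul_le_mul_right mink _
        _ = ((wBall d ω R) ^ (-(1 + lam * p)) *
              ∫⁻ x in Metric.ball (0 : EuclideanSpace ℝ (Fin d)) R,
                (‖f x‖₊ : ℝ≥0∞) ^ p * ENNReal.ofReal (ω x)) ^ (1 / p)
            + ((wBall d ω R) ^ (-(1 + lam * p)) *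
              ∫⁻ x in Metric.ball (0 : EuclideanSpace ℝ (Fin d)) R,
                (‖g x‖₊ : ℝ≥0∞) ^ p * ENNReal.ofReal (ω x)) ^ (1 / p) := by
            rw [mul_add, hconv _ hf, hconv _ hg,
              ENNReal.mul_rpow_of_nonneg _ _ (by positivity : (0:ℝ) ≤ 1/p),
              ENNReal.mul_rpow_of_nonneg _ _ (by positivity : (0:ℝ) ≤ 1/p)]
        _ ≤ morreyNorm d p lam ω f + morreyNorm d p lam ω g := by
            refine add_le_add ?_ ?_ <;> rw [morreyNorm]
            · exact le_iSup₂ (f := fun (r : ℝ) (_ : 0 < r) =>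
                ((wBall d ω r) ^ (-(1 + lam * p)) *
                  ∫⁻ x in Metric.ball (0 : EuclideanSpace ℝ (Fin d)) r,
                    (‖f x‖₊ : ℝ≥0∞) ^ p * ENNReal.ofReal (ω x)) ^ (1 / p)) R hR
            · exact le_iSup₂ (f := fun (r : ℝ) (_ : 0 < r) =>
                ((wBall d ω r) ^ (-(1 + lam * p)) *
                  ∫⁻ x in Metric.ball (0 : EuclideanSpace ℝ (Fin d)) r,
                    (‖g x‖₊ : ℝ≥0∞) ^ p * ENNReal.ofReal (ω x)) ^ (1 / p)) R hR
    · -- vanishing iff a.e. zero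
      intro f hf
      constructor
      · intro h0
        refine ae_zero_of_balls ω hm hpos (p := p) f hf ?_
        intro R hR
        have hterm : ((wBall d ω R) ^ (-(1 + lam * p)) *
            ∫⁻ x in Metric.ball (0 : EuclideanSpace ℝ (Fin d)) R,
              (‖f x‖₊ : ℝ≥0∞) ^ p * ENNReal.ofReal (ω x)) ^ (1 / p) = 0 := by
          refine le_antisymm ?_ zero_le
          rw [← h0, morreyNorm]
          exact le_iSup₂ (f := fun (r : ℝ) (_ : 0 < r) =>
            ((wBall d ω r) ^ (-(1 + lam * p)) *
              ∫⁻ x in Metric.ball (0 : EuclideanSpace ℝ (Fin d)) r,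
                (‖f x‖₊ : ℝ≥0∞) ^ p * ENNReal.ofReal (ω x)) ^ (1 / p)) R hR
        have h1 : (wBall d ω R) ^ (-(1 + lam * p)) *
            (∫⁻ x in Metric.ball (0 : EuclideanSpace ℝ (Fin d)) R,
              (‖f x‖₊ : ℝ≥0∞) ^ p * ENNReal.ofReal (ω x)) = 0 := by
          rcases ENNReal.rpow_eq_zero_iff.1 hterm with ⟨h', _⟩ | ⟨_, h'⟩
          · exact h'
          · exact absurd h' (by positivity : (0:ℝ) < 1/p).asymm
        have hlp : (0:ℝ) ≤ 1 + lam * p := by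
          have : -1 ≤ lam * p := by
            have := mul_le_mul_of_nonneg_right hl1 hp0.le
            rw [neg_mul, one_div, inv_mul_cancel₀ hp0.ne'] at this
            linarith
          linarith
        rcases mul_eq_zero.1 h1 with h' | h'
        · rcases ENNReal.rpow_eq_zero_iff.1 h' with ⟨_, h''⟩ | ⟨h'', _⟩
          · linarith
          · exact absurd h'' (hwtop R hR)
        · exact h'
      · intro h0
        rw [morreyNorm]
        refine le_antisymm (iSup_le fun R => iSup_le fun hR => ?_) zero_le
        have hzero : (∫⁻ x in Metric.ball (0 : EuclideanSpace ℝ (Fin d)) R,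
            (‖f x‖₊ : ℝ≥0∞) ^ p * ENNReal.ofReal (ω x)) = 0 := by
          have hae : ∀ᵐ x ∂(volume.restrict (Metric.ball (0 : EuclideanSpace ℝ (Fin d)) R)),
              (‖f x‖₊ : ℝ≥0∞) ^ p * ENNReal.ofReal (ω x) = 0 := by
            filter_upwards [ae_restrict_of_ae h0] with x hx
            simp [hx, ENNReal.zero_rpow_of_pos hp0]
          rw [lintegral_congr_ae hae, lintegral_zero]
        rw [hzero, mul_zero, ENNReal.zero_rpow_of_pos (by positivity)]
  · -- triviality for lam < -1/p
    intro lam hl f hf hne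
    refine ae_zero_of_balls ω hm hpos (p := p) f hf ?_
    set M := morreyNorm d p lam ω f with hM
    set s : ℝ := 1 + lam * p with hsdef
    have hs : s < 0 := by
      have := mul_lt_mul_of_pos_right hl hp0
      rw [neg_mul, one_div, inv_mul_cancel₀ hp0.ne'] at this
      simp only [hsdef]; linarith
    have hbound : ∀ R : ℝ, 0 < R →
        (∫⁻ x in Metric.ball (0 : EuclideanSpace ℝ (Fin d)) R,
          (‖f x‖₊ : ℝ≥0∞) ^ p * ENNReal.ofReal (ω x)) ≤ M ^ p * wBall d ω R ^ s := by
      intro R hR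
      have h1 : ((wBall d ω R) ^ (-s) *
          ∫⁻ x in Metric.ball (0 : EuclideanSpace ℝ (Fin d)) R,
            (‖f x‖₊ : ℝ≥0∞) ^ p * ENNReal.ofReal (ω x)) ^ (1 / p) ≤ M := by
        rw [hM, morreyNorm]
        exact le_iSup₂ (f := fun (r : ℝ) (_ : 0 < r) =>
          ((wBall d ω r) ^ (-(1 + lam * p)) *
            ∫⁻ x in Metric.ball (0 : EuclideanSpace ℝ (Fin d)) r,
              (‖f x‖₊ : ℝ≥0∞) ^ p * ENNReal.ofReal (ω x)) ^ (1 / p)) R hR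
      have h2 : (wBall d ω R) ^ (-s) *
          (∫⁻ x in Metric.ball (0 : EuclideanSpace ℝ (Fin d)) R,
            (‖f x‖₊ : ℝ≥0∞) ^ p * ENNReal.ofReal (ω x)) ≤ M ^ p := by
        have h3 := ENNReal.rpow_le_rpow h1 hp0.le
        rwa [← ENNReal.rpow_mul, one_div, inv_mul_cancel₀ hp0.ne', ENNReal.rpow_one] at h3
      have hrne0 : (wBall d ω R) ^ (-s) ≠ 0 := by
        simp [ENNReal.rpow_eq_zero_iff, hwpos R hR, hwtop R hR]
      have hrnetop : (wBall d ω R) ^ (-s) ≠ ⊤ := by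
        simp [ENNReal.rpow_eq_top_iff, hwpos R hR, hwtop R hR]
      calc (∫⁻ x in Metric.ball (0 : EuclideanSpace ℝ (Fin d)) R,
            (‖f x‖₊ : ℝ≥0∞) ^ p * ENNReal.ofReal (ω x))
          = ((wBall d ω R) ^ (-s))⁻¹ * ((wBall d ω R) ^ (-s) *
            (∫⁻ x in Metric.ball (0 : EuclideanSpace ℝ (Fin d)) R,
              (‖f x‖₊ : ℝ≥0∞) ^ p * ENNReal.ofReal (ω x))) := by
            rw [← mul_assoc, ENNReal.inv_mul_cancel hrne0 hrnetop, one_mul]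
        _ ≤ ((wBall d ω R) ^ (-s))⁻¹ * M ^ p := mul_le_mul_right h2 _
        _ = M ^ p * wBall d ω R ^ s := by
            rw [← ENNReal.rpow_neg, neg_neg, mul_comm]
    intro R0 hR0
    have hMp : M ^ p ≠ ⊤ := by
      intro h
      rcases ENNReal.rpow_eq_top_iff.1 h with ⟨_, hp'⟩ | ⟨hMt, _⟩
      · linarith
      · exact hne hMt
    have htend : Filter.Tendsto (fun R : ℝ => M ^ p * wBall d ω R ^ s)
        Filter.atTop (nhds 0) := by
      have heq : ∀ᶠ R : ℝ in Filter.atTop, (M ^ p * sphereInt d ω ^ s) *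
          ENNReal.ofReal ((R ^ (α + d) / (α + d)) ^ s) = M ^ p * wBall d ω R ^ s := by
        filter_upwards [Filter.eventually_gt_atTop (0:ℝ)] with R hR
        rw [hweq R hR, ENNReal.mul_rpow_of_ne_top hctop.ne ENNReal.ofReal_ne_top,
          ENNReal.ofReal_rpow_of_pos (by positivity), mul_assoc]
      have h5 : Filter.Tendsto (fun R : ℝ => R ^ (α + d) / (α + d)) Filter.atTop Filter.atTop :=
        (tendsto_rpow_atTop hαd).atTop_div_const hαd
      have h4 : Filter.Tendsto (fun R : ℝ => (R ^ (α + d) / (α + d)) ^ s)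
          Filter.atTop (nhds 0) := by
        have := (tendsto_rpow_neg_atTop (y := -s) (by linarith)).comp h5
        simpa [Function.comp_def] using this
      have h6 := ENNReal.tendsto_ofReal h4
      have hane : M ^ p * sphereInt d ω ^ s ≠ ⊤ :=
        ENNReal.mul_ne_top hMp (by simp [ENNReal.rpow_eq_top_iff, hc0.ne', hctop.ne])
      have h7 := ENNReal.Tendsto.const_mul (a := M ^ p * sphereInt d ω ^ s) h6 (Or.inr hane)
      rw [ENNReal.ofReal_zero, mul_zero] at h7
      exact h7.congr' heq
    have hle : ∀ᶠ R : ℝ in Filter.atTop,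
        (∫⁻ x in Metric.ball (0 : EuclideanSpace ℝ (Fin d)) R0,
          (‖f x‖₊ : ℝ≥0∞) ^ p * ENNReal.ofReal (ω x)) ≤ M ^ p * wBall d ω R ^ s := by
      filter_upwards [Filter.eventually_ge_atTop R0] with R hRR
      exact le_trans (lintegral_mono_set (Metric.ball_subset_ball hRR))
        (hbound R (lt_of_lt_of_le hR0 hRR))
    have := ge_of_tendsto htend hle
    simpa using this
end
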